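/- arXiv:funct-an/9712009 — 9 statements merged into one kernel-verified Lean document; each statement's English description precedes it below -/
import Mathlib

section
/- Under the stated setup, the restriction of σ to A ∩ B_2′ is a unital *-homomorphism: σ is linear, σ(1) = 1, σ(x*) = σ(x)* for every x ∈ A, and σ(xy) = σ(x)σ(y) whenever x and y are elements of A commuting with every element of B_2. -/
/-- Under the crossed-product setup `A ≅ B ⋊_ρ ℕ`, the restriction of `σ` to
`A ∩ B₂′` is a unital \*-homomorphism: `σ` is linear, `σ 1 = 1`,
`σ (star x) = star (σ x)` for every `x ∈ A`, and `σ (x * y) = σ x * σ y`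
whenever `x` and `y` commute with every element of `B 2`. -/
theorem sigma_restriction_unital_star_hom
    {A : Type*} [NormedRing A] [StarRing A] [CStarRing A] [CompleteSpace A]
    [NormedAlgebra ℂ A] [StarModule ℂ A] [PartialOrder A] [StarOrderedRing A]
    -- the increasing sequence of finite-dimensional unital C*-subalgebras
    (B : ℕ → StarSubalgebra ℂ A)
    (hBmono : ∀ N : ℕ, B N ≤ B (N + 1))
    (hBfd : ∀ N : ℕ, FiniteDimensional ℂ (B N))
    -- Bc is the norm closure of the union of the B_N, assumed simple
    (Bc : StarSubalgebra ℂ A)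
    (hBc : (Bc : Set A) = closure (⋃ N : ℕ, (B N : Set A)))
    (hBsimple : ∀ I : TwoSidedIdeal Bc, IsClosed (I : Set Bc) → I = ⊥ ∨ I = ⊤)
    -- the isometry s and the projection p = ss*
    (s : A) (hs : star s * s = 1)
    (p : A) (hp : p = s * star s) (hpne : p ≠ 1) (hpB1 : p ∈ B 1)
    (hsBN : ∀ N : ℕ, ∀ b ∈ B N, s * b * star s ∈ B (N + 1))
    (hpBNp : ∀ N : ℕ, ∀ b ∈ B N, ∃ c ∈ B (N + 1), p * b * p = s * c * star s)
    (hsBc : ∀ b ∈ Bc, ∃ c ∈ Bc, s * b * star s = p * c * p)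
    (hpBcp : ∀ b ∈ Bc, ∃ c ∈ Bc, p * b * p = s * c * star s)
    -- A is generated as a C*-algebra by Bc together with s
    (hgen : (StarAlgebra.adjoin ℂ ((Bc : Set A) ∪ {s})).topologicalClosure = ⊤)
    -- A is simple and purely infinite
    (hAsimple : ∀ I : TwoSidedIdeal A, IsClosed (I : Set A) → I = ⊥ ∨ I = ⊤)
    (hApi : ∀ a : A, 0 ≤ a → a ≠ 0 → ∃ x : A, x * a * star x = 1)
    -- the elements a_1, ..., a_r of B_1 and the map σ
    {r : ℕ} (a : Fin r → A) (haB1 : ∀ i, a i ∈ B 1)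
    (hasum : ∑ i, a i * p * star (a i) = 1)
    (hap : ∀ i, a i * p = a i)
    (σ : A → A)
    (hσ : ∀ x : A, σ x = ∑ i, a i * (s * x * star s) * star (a i))
    :
    (∀ x y : A, σ (x + y) = σ x + σ y) ∧
    (∀ (c : ℂ) (x : A), σ (c • x) = c • σ x) ∧
    σ 1 = 1 ∧
    (∀ x : A, σ (star x) = star (σ x)) ∧
    (∀ x y : A, (∀ b ∈ B 2, x * b = b * x) → (∀ b ∈ B 2, y * b = b * y) →
      σ (x * y) = σ x * σ y) := by

  have hss : ∀ z : A, star s * (s * z) = z := fun z => by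
    rw [← mul_assoc, hs, one_mul]
  have hpstar : star p = p := by
    rw [hp, star_mul, star_star]
  have hpa : ∀ i, p * star (a i) = star (a i) := fun i => by
    conv_rhs => rw [← hap i]
    rw [star_mul, hpstar]
  have hadd : ∀ x y : A, σ (x + y) = σ x + σ y := by
    intro x y
    rw [hσ, hσ, hσ, ← Finset.sum_add_distrib]
    refine Finset.sum_congr rfl fun i _ => ?_
    simp only [mul_add, add_mul]
  have hsmul : ∀ (c : ℂ) (x : A), σ (c • x) = c • σ x := by
    intro c x
    rw [hσ, hσ, Finset.smul_sum]
    refine Finset.sum_congr rfl fun i _ => ?_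
    simp only [mul_smul_comm, smul_mul_assoc]
  have hone : σ 1 = 1 := by
    calc σ 1 = ∑ i, a i * p * star (a i) := by
          rw [hσ]
          exact Finset.sum_congr rfl fun i _ => by rw [mul_one, ← hp]
      _ = 1 := hasum
  have hstar : ∀ x : A, σ (star x) = star (σ x) := by
    intro x
    rw [hσ, hσ, star_sum]
    refine Finset.sum_congr rfl fun i _ => ?_
    simp only [star_mul, star_star, mul_assoc]
  refine ⟨hadd, hsmul, hone, hstar, ?_⟩
  intro x y hx hy
  have h1 : ∑ i, a i * star (a i) = 1 := by
    rw [← hasum]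
    exact Finset.sum_congr rfl fun i _ => by rw [hap i]
  have key : ∀ i j : Fin r,
      (a i * (s * x * star s) * star (a i)) * (a j * (s * y * star s) * star (a j)) =
      (a i * star (a i)) * (a j * (s * (x * y) * star s) * star (a j)) := by
    intro i j
    obtain ⟨c, hcB, hpc⟩ := hpBNp 1 (star (a i) * a j)
      (mul_mem (star_mem (haB1 i)) (haB1 j))
    have hcs : star (a i) * a j = s * c * star s := by
      have : p * (star (a i) * a j) * p = star (a i) * a j := by
        calc p * (star (a i) * a j) * p = (p * star (a i)) * (a j * p) := by
              simp only [mul_assoc]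
          _ = star (a i) * a j := by rw [hpa i, hap j]
      rw [← this, hpc]
    have hcs' : ∀ z : A, star (a i) * (a j * z) = s * (c * (star s * z)) := fun z => by
      rw [← mul_assoc, hcs]; simp only [mul_assoc]
    have hxc : x * c = c * x := hx c hcB
    have hxc' : ∀ z : A, x * (c * z) = c * (x * z) := fun z => by
      rw [← mul_assoc, hxc, mul_assoc]
    simp only [mul_assoc, hcs', hss, hxc']
  symm
  calc σ x * σ y
      = ∑ i, ∑ j, (a i * star (a i)) * (a j * (s * (x * y) * star s) * star (a j)) := by
        rw [hσ, hσ, Finset.sum_mul_sum]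
        exact Finset.sum_congr rfl fun i _ =>
          Finset.sum_congr rfl fun j _ => key i j
    _ = (∑ i, a i * star (a i)) * ∑ j, a j * (s * (x * y) * star s) * star (a j) := by
        rw [Finset.sum_mul_sum]
    _ = σ (x * y) := by rw [h1, one_mul, hσ]
end

section
/- Under the stated setup, σ(A ∩ B_{N+1}′) ⊆ A ∩ B_N′ for every N ≥ 1; that is, if x ∈ A commutes with every element of B_{N+1}, then σ(x) commutes with every element of B_N. -/
/-- Under the crossed-product setup `A ≅ B ⋊_ρ ℕ`, one has
`σ (A ∩ B_{N+1}′) ⊆ A ∩ B_N′` for every `N ≥ 1`: if `x ∈ A` commutes with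
every element of `B (N+1)`, then `σ x` commutes with every element of `B N`. -/
theorem sigma_maps_commutant_into_commutant
    {A : Type*} [NormedRing A] [StarRing A] [CStarRing A] [CompleteSpace A]
    [NormedAlgebra ℂ A] [StarModule ℂ A] [PartialOrder A] [StarOrderedRing A]
    -- the increasing sequence of finite-dimensional unital C*-subalgebras
    (B : ℕ → StarSubalgebra ℂ A)
    (hBmono : ∀ N : ℕ, B N ≤ B (N + 1))
    (hBfd : ∀ N : ℕ, FiniteDimensional ℂ (B N))
    -- Bc is the norm closure of the union of the B_N, assumed simple
    (Bc : StarSubalgebra ℂ A)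
    (hBc : (Bc : Set A) = closure (⋃ N : ℕ, (B N : Set A)))
    (hBsimple : ∀ I : TwoSidedIdeal Bc, IsClosed (I : Set Bc) → I = ⊥ ∨ I = ⊤)
    -- the isometry s and the projection p = ss*
    (s : A) (hs : star s * s = 1)
    (p : A) (hp : p = s * star s) (hpne : p ≠ 1) (hpB1 : p ∈ B 1)
    (hsBN : ∀ N : ℕ, ∀ b ∈ B N, s * b * star s ∈ B (N + 1))
    (hpBNp : ∀ N : ℕ, ∀ b ∈ B N, ∃ c ∈ B (N + 1), p * b * p = s * c * star s)
    (hsBc : ∀ b ∈ Bc, ∃ c ∈ Bc, s * b * star s = p * c * p)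
    (hpBcp : ∀ b ∈ Bc, ∃ c ∈ Bc, p * b * p = s * c * star s)
    -- A is generated as a C*-algebra by Bc together with s
    (hgen : (StarAlgebra.adjoin ℂ ((Bc : Set A) ∪ {s})).topologicalClosure = ⊤)
    -- A is simple and purely infinite
    (hAsimple : ∀ I : TwoSidedIdeal A, IsClosed (I : Set A) → I = ⊥ ∨ I = ⊤)
    (hApi : ∀ a : A, 0 ≤ a → a ≠ 0 → ∃ x : A, x * a * star x = 1)
    -- the elements a_1, ..., a_r of B_1 and the map σ
    {r : ℕ} (a : Fin r → A) (haB1 : ∀ i, a i ∈ B 1)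
    (hasum : ∑ i, a i * p * star (a i) = 1)
    (hap : ∀ i, a i * p = a i)
    (σ : A → A)
    (hσ : ∀ x : A, σ x = ∑ i, a i * (s * x * star s) * star (a i))
    :
    ∀ N : ℕ, 1 ≤ N → ∀ x : A, (∀ b ∈ B (N + 1), x * b = b * x) →
      ∀ b ∈ B N, σ x * b = b * σ x := by

  intro N hN x hx b hb
  have hmono : Monotone B := monotone_nat_of_le_succ hBmono
  have hps : p * s = s := by rw [hp, mul_assoc, hs, mul_one]
  have hsp : star s * p = star s := by rw [hp, ← mul_assoc, hs, one_mul]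
  have hss' : ∀ z : A, star s * (s * z) = z := fun z => by
    rw [← mul_assoc, hs, one_mul]
  have hps' : ∀ z : A, p * (s * z) = s * z := fun z => by rw [← mul_assoc, hps]
  have hsps : ∀ z : A, star s * (p * z) = star s * z := fun z => by
    rw [← mul_assoc, hsp]
  have haiN : ∀ i, a i ∈ B N := fun i => hmono hN (haB1 i)
  have huN : ∀ i j : Fin r, star (a i) * b * a j ∈ B N := fun i j =>
    mul_mem (mul_mem (star_mem (haiN i)) hb) (haiN j)
  have hc : ∀ i j : Fin r, ∃ c, c ∈ B (N + 1) ∧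
      p * (star (a i) * b * a j) * p = s * c * star s := by
    intro i j
    obtain ⟨c, hc1, hc2⟩ := hpBNp N _ (huN i j)
    exact ⟨c, hc1, hc2⟩
  choose c hcB hceq using hc
  have hxc : ∀ i j, x * c i j = c i j * x := fun i j => hx _ (hcB i j)
  -- trailing-variable (reassociated) versions of the key identities
  have L1 : ∀ (i j : Fin r) (z : A),
      star s * (star (a i) * (b * (a j * (s * z)))) = c i j * z := by
    intro i j z
    have h := congrArg (fun w => star s * (w * (s * z))) (hceq i j)
    simp only [mul_assoc] at h
    simp only [hsps, hps', hss'] at h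
    exact h
  have L2 : ∀ (i j : Fin r) (z : A),
      x * (c i j * z) = c i j * (x * z) := fun i j z => by
    rw [← mul_assoc, hxc i j, mul_assoc]
  have L3 : ∀ (i j : Fin r) (z : A),
      s * (c i j * z) = p * (star (a i) * (b * (a j * (p * (s * z))))) := by
    intro i j z
    have h := congrArg (fun w => w * (s * z)) (hceq i j)
    simp only [mul_assoc] at h
    simp only [hss'] at h
    exact h.symm
  have key : ∀ i j : Fin r,
      (a i * (s * x * star s) * star (a i) * b) * (a j * p * star (a j)) =
      (a i * p * star (a i)) * (b * (a j * (s * x * star s) * star (a j))) := by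
    intro i j
    simp only [mul_assoc]
    rw [show p * star (a j) = s * (star s * star (a j)) from by rw [hp, mul_assoc]]
    rw [L1, L2, L3, hps']
  have expand1 : σ x * b =
      ∑ i, ∑ j, (a i * (s * x * star s) * star (a i) * b) * (a j * p * star (a j)) := by
    calc σ x * b = ∑ i, (a i * (s * x * star s) * star (a i)) * b := by
          rw [hσ, Finset.sum_mul]
      _ = ∑ i, ((a i * (s * x * star s) * star (a i)) * b) *
            (∑ j, a j * p * star (a j)) := by rw [hasum]; simp
      _ = _ := by simp only [Finset.mul_sum]
  have expand2 : b * σ x =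
      ∑ i, ∑ j, (a i * p * star (a i)) * (b * (a j * (s * x * star s) * star (a j))) := by
    calc b * σ x = (∑ i, a i * p * star (a i)) * (b * σ x) := by
          rw [hasum, one_mul]
      _ = ∑ i, (a i * p * star (a i)) * (b * σ x) := by rw [Finset.sum_mul]
      _ = ∑ i, (a i * p * star (a i)) *
            (b * (∑ j, a j * (s * x * star s) * star (a j))) := by rw [hσ]
      _ = _ := by simp only [Finset.mul_sum]
  rw [expand1, expand2]
  exact Finset.sum_congr rfl fun i _ => Finset.sum_congr rfl fun j _ => key i j
end

section
/- Under the stated setup, for every j ≥ 1 and every x ∈ A commuting with every element of B_{j+1}, one has s^j x s*^j = σ^j(x) s^j s*^j = s^j s*^j σ^j(x), where σ^j denotes the j-fold iterate of σ. -/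
/-- Under the crossed-product setup `A ≅ B ⋊_ρ ℕ`, for every `j ≥ 1` and every
`x ∈ A` commuting with every element of `B (j+1)`, one has
`s^j x (s*)^j = σ^j(x) s^j (s*)^j = s^j (s*)^j σ^j(x)`. -/
theorem sj_x_sj_star_eq_sigma_iterate
    {A : Type*} [NormedRing A] [StarRing A] [CStarRing A] [CompleteSpace A]
    [NormedAlgebra ℂ A] [StarModule ℂ A] [PartialOrder A] [StarOrderedRing A]
    -- the increasing sequence of finite-dimensional unital C*-subalgebras
    (B : ℕ → StarSubalgebra ℂ A)
    (hBmono : ∀ N : ℕ, B N ≤ B (N + 1))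
    (hBfd : ∀ N : ℕ, FiniteDimensional ℂ (B N))
    -- Bc is the norm closure of the union of the B_N, assumed simple
    (Bc : StarSubalgebra ℂ A)
    (hBc : (Bc : Set A) = closure (⋃ N : ℕ, (B N : Set A)))
    (hBsimple : ∀ I : TwoSidedIdeal Bc, IsClosed (I : Set Bc) → I = ⊥ ∨ I = ⊤)
    -- the isometry s and the projection p = ss*
    (s : A) (hs : star s * s = 1)
    (p : A) (hp : p = s * star s) (hpne : p ≠ 1) (hpB1 : p ∈ B 1)
    (hsBN : ∀ N : ℕ, ∀ b ∈ B N, s * b * star s ∈ B (N + 1))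
    (hpBNp : ∀ N : ℕ, ∀ b ∈ B N, ∃ c ∈ B (N + 1), p * b * p = s * c * star s)
    (hsBc : ∀ b ∈ Bc, ∃ c ∈ Bc, s * b * star s = p * c * p)
    (hpBcp : ∀ b ∈ Bc, ∃ c ∈ Bc, p * b * p = s * c * star s)
    -- A is generated as a C*-algebra by Bc together with s
    (hgen : (StarAlgebra.adjoin ℂ ((Bc : Set A) ∪ {s})).topologicalClosure = ⊤)
    -- A is simple and purely infinite
    (hAsimple : ∀ I : TwoSidedIdeal A, IsClosed (I : Set A) → I = ⊥ ∨ I = ⊤)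
    (hApi : ∀ a : A, 0 ≤ a → a ≠ 0 → ∃ x : A, x * a * star x = 1)
    -- the elements a_1, ..., a_r of B_1 and the map σ
    {r : ℕ} (a : Fin r → A) (haB1 : ∀ i, a i ∈ B 1)
    (hasum : ∑ i, a i * p * star (a i) = 1)
    (hap : ∀ i, a i * p = a i)
    (σ : A → A)
    (hσ : ∀ x : A, σ x = ∑ i, a i * (s * x * star s) * star (a i))
    :
    ∀ j : ℕ, 1 ≤ j → ∀ x : A, (∀ b ∈ B (j + 1), x * b = b * x) →
      s ^ j * x * star (s ^ j) = σ^[j] x * (s ^ j * star (s ^ j)) ∧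
      s ^ j * x * star (s ^ j) = (s ^ j * star (s ^ j)) * σ^[j] x := by
  -- basic identities
  have hstar_p : star p = p := by rw [hp]; simp [star_mul]
  have hps : p * s = s := by rw [hp, mul_assoc, hs, mul_one]
  have hsp : star s * p = star s := by rw [hp, ← mul_assoc, hs, one_mul]
  have hpa : ∀ i, p * star (a i) = star (a i) := fun i => by
    have := congrArg star (hap i)
    simpa [star_mul, hstar_p] using this
  have hps' : ∀ z : A, p * (s * z) = s * z := fun z => by rw [← mul_assoc, hps]
  have hsp' : ∀ z : A, star s * (p * z) = star s * z := fun z => by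
    rw [← mul_assoc, hsp]
  have hpa' : ∀ i, ∀ z : A, p * (star (a i) * z) = star (a i) * z := fun i z => by
    rw [← mul_assoc, hpa]
  have hsum1 : ∑ i, a i * star (a i) = 1 := by
    rw [← hasum]; exact Finset.sum_congr rfl fun i _ => by rw [hap]
  have hBle : ∀ {M N : ℕ}, M ≤ N → B M ≤ B N := by
    intro M N h
    induction h with
    | refl => exact le_rfl
    | step _ ih => exact ih.trans (hBmono _)
  -- multiplication of sandwiched elements
  have hmul3 : ∀ u v : A, (s * u * star s) * (s * v * star s) = s * (u * v) * star s := by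
    intro u v
    calc (s * u * star s) * (s * v * star s)
        = s * u * ((star s * s) * (v * star s)) := by simp only [mul_assoc]
      _ = s * (u * v) * star s := by rw [hs, one_mul]; simp only [mul_assoc]
  have hpl : ∀ u : A, p * (s * u * star s) = s * u * star s := fun u => by
    rw [← mul_assoc, ← mul_assoc, hps]
  have hpr : ∀ u : A, (s * u * star s) * p = s * u * star s := fun u => by
    rw [mul_assoc, hsp]
  -- key commutation lemma
  have key : ∀ N : ℕ, ∀ x : A, (∀ b ∈ B (N + 1), x * b = b * x) →
      ∀ e ∈ B N, (s * x * star s) * (p * e * p) = (p * e * p) * (s * x * star s) := by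
    intro N x hx e he
    obtain ⟨c, hcB, hce⟩ := hpBNp N e he
    rw [hce, hmul3, hmul3, hx c hcB]
  -- one-step lemma: s x s* = σ(x) p
  have lem1 : ∀ x : A, (∀ b ∈ B 2, x * b = b * x) → s * x * star s = σ x * p := by
    intro x hx
    have hterm : ∀ i, a i * (s * x * star s) * star (a i) * p
        = a i * star (a i) * (s * x * star s) := by
      intro i
      calc a i * (s * x * star s) * star (a i) * p
          = a i * ((s * x * star s) * (p * star (a i) * p)) := by
            rw [hpa]; simp only [mul_assoc]
        _ = a i * ((p * star (a i) * p) * (s * x * star s)) := by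
            rw [key 1 x hx (star (a i)) (star_mem (haB1 i))]
        _ = a i * star (a i) * (s * x * star s) := by
            rw [hpa, mul_assoc (star (a i)) p, hpl]; simp only [mul_assoc]
    symm
    calc σ x * p = ∑ i, a i * (s * x * star s) * star (a i) * p := by
          rw [hσ, Finset.sum_mul]
      _ = ∑ i, a i * star (a i) * (s * x * star s) :=
          Finset.sum_congr rfl fun i _ => hterm i
      _ = (∑ i, a i * star (a i)) * (s * x * star s) := by rw [Finset.sum_mul]
      _ = s * x * star s := by rw [hsum1, one_mul]
  -- star of σ
  have hσstar : ∀ x : A, star (σ (star x)) = σ x := fun x => by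
    rw [hσ, hσ, star_sum]
    refine Finset.sum_congr rfl fun i _ => ?_
    simp only [star_mul, star_star]
    simp only [mul_assoc]
  -- one-step lemma, other side: s x s* = p σ(x)
  have lem1' : ∀ x : A, (∀ b ∈ B 2, x * b = b * x) → s * x * star s = p * σ x := by
    intro x hx
    have hx' : ∀ b ∈ B 2, star x * b = b * star x := fun b hb => by
      have := congrArg star (hx (star b) (star_mem hb))
      simpa [star_mul] using this.symm
    have h := congrArg star (lem1 (star x) hx')
    simp only [star_mul, star_star, hstar_p] at h
    rw [hσstar] at h
    calc s * x * star s = s * (x * star s) := by rw [mul_assoc]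
      _ = p * σ x := h
  -- σ(x) commutes with B_N when x commutes with B_{N+1}
  have lem2 : ∀ N : ℕ, 1 ≤ N → ∀ x : A, (∀ b ∈ B (N + 1), x * b = b * x) →
      ∀ b ∈ B N, σ x * b = b * σ x := by
    intro N hN x hx b hb
    have key2 : ∀ e ∈ B N, (s * x * star s) * (e * p) = p * e * p * (s * x * star s) := by
      intro e he
      have h := key N x hx e he
      have h2 : (s * x * star s) * (p * e * p) = (s * x * star s) * (e * p) := by
        rw [mul_assoc p e p, ← mul_assoc (s * x * star s) p (e * p), hpr x]
      exact h2.symm.trans h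
    have hterm : ∀ i k, a i * (s * x * star s) * star (a i) * (b * (a k * p * star (a k)))
        = (a i * star (a i)) * (b * (a k * (s * x * star s) * star (a k))) := by
      intro i k
      have he : star (a i) * b * a k ∈ B N :=
        mul_mem (mul_mem (star_mem (hBle hN (haB1 i))) hb) (hBle hN (haB1 k))
      calc a i * (s * x * star s) * star (a i) * (b * (a k * p * star (a k)))
          = a i * ((s * x * star s) * (star (a i) * b * a k * p) * star (a k)) := by
            simp only [mul_assoc]
        _ = a i * ((p * (star (a i) * b * a k) * p) * (s * x * star s) * star (a k)) := by
            rw [key2 (star (a i) * b * a k) he]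
        _ = (a i * star (a i)) * (b * (a k * (s * x * star s) * star (a k))) := by
            simp only [mul_assoc]
            rw [hpa', hps']
    calc σ x * b
        = ∑ i, ∑ k, a i * (s * x * star s) * star (a i) * (b * (a k * p * star (a k))) := by
          rw [hσ, Finset.sum_mul]
          refine Finset.sum_congr rfl fun i _ => ?_
          rw [← Finset.mul_sum, ← Finset.mul_sum, hasum, mul_one]
      _ = ∑ i, ∑ k, (a i * star (a i)) * (b * (a k * (s * x * star s) * star (a k))) :=
          Finset.sum_congr rfl fun i _ => Finset.sum_congr rfl fun k _ => hterm i k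
      _ = b * σ x := by
          rw [← Finset.sum_mul_sum, hsum1, one_mul, ← Finset.mul_sum, hσ]
  -- iterated version of lem2
  have lemIter : ∀ k N : ℕ, 1 ≤ N → ∀ x : A, (∀ b ∈ B (N + k), x * b = b * x) →
      ∀ b ∈ B N, σ^[k] x * b = b * σ^[k] x := by
    intro k
    induction k with
    | zero =>
        intro N hN x hx b hb
        simpa using hx b hb
    | succ k ih =>
        intro N hN x hx b hb
        rw [Function.iterate_succ_apply]
        refine ih N hN (σ x) (fun c hc => ?_) b hb
        exact lem2 (N + k) (le_trans hN (Nat.le_add_right _ _)) x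
          (fun d hd => hx d hd) c hc
  -- main induction
  intro j hj
  induction j, hj using Nat.le_induction with
  | base =>
      intro x hx
      rw [pow_one, Function.iterate_one, ← hp]
      exact ⟨lem1 x hx, lem1' x hx⟩
  | succ j hj ih =>
      intro x hx
      have hx' : ∀ b ∈ B (j + 1), x * b = b * x := fun b hb => hx b (hBmono (j + 1) hb)
      obtain ⟨ih1, ih2⟩ := ih x hx'
      have hy2 : ∀ b ∈ B 2, σ^[j] x * b = b * σ^[j] x := by
        refine lemIter j 2 (by norm_num) x (fun b hb => hx b ?_)
        rwa [Nat.add_comm] at hb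
      have e1 : s ^ (j + 1) * x * star (s ^ (j + 1))
          = s * (s ^ j * x * star (s ^ j)) * star s := by
        rw [pow_succ' s j, star_mul]
        simp only [mul_assoc]
      constructor
      · calc s ^ (j + 1) * x * star (s ^ (j + 1))
            = s * (s ^ j * x * star (s ^ j)) * star s := e1
          _ = s * (σ^[j] x * (s ^ j * star (s ^ j))) * star s := by rw [ih1]
          _ = (s * σ^[j] x * star s) * (s * (s ^ j * star (s ^ j)) * star s) :=
              (hmul3 _ _).symm
          _ = (σ (σ^[j] x) * p) * (s * (s ^ j * star (s ^ j)) * star s) := by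
              rw [lem1 _ hy2]
          _ = σ^[j + 1] x * (s ^ (j + 1) * star (s ^ (j + 1))) := by
              rw [Function.iterate_succ_apply', pow_succ' s j, star_mul]
              simp only [mul_assoc]
              rw [hps']
      · calc s ^ (j + 1) * x * star (s ^ (j + 1))
            = s * (s ^ j * x * star (s ^ j)) * star s := e1
          _ = s * ((s ^ j * star (s ^ j)) * σ^[j] x) * star s := by rw [ih2]
          _ = (s * (s ^ j * star (s ^ j)) * star s) * (s * σ^[j] x * star s) :=
              (hmul3 _ _).symm
          _ = (s * (s ^ j * star (s ^ j)) * star s) * (p * σ (σ^[j] x)) := by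
              rw [lem1' _ hy2]
          _ = (s ^ (j + 1) * star (s ^ (j + 1))) * σ^[j + 1] x := by
              rw [Function.iterate_succ_apply', pow_succ' s j, star_mul]
              simp only [mul_assoc]
              rw [hsp']
end

section
/- Under the stated setup, let N be a positive integer and let p^{(1)},…,p^{(J)} be the minimal central projections of B_N, so that Σ_j p^{(j)} = 1. Then there exists an integer N_1 ≥ N such that for every integer l ≥ 0, every nonzero projection q ∈ A ∩ B_{N_1+l}′, and every j ∈ {1,…,J}, one has p^{(j)} σ^l(q) p^{(j)} ≠ 0. -/
set_option maxHeartbeats 1000000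


/-- Under the crossed-product setup `A ≅ B ⋊_ρ ℕ`: given `N ≥ 1` and the
minimal central projections `P 1, …, P J` of `B N` (which sum to `1`), there
is an integer `N₁ ≥ N` such that for every `l ≥ 0`, every nonzero projection
`q ∈ A ∩ B_{N₁+l}′` and every `j`, one has `P j * σ^l(q) * P j ≠ 0`. -/
theorem exists_N1_central_compression_nonzero
    {A : Type*} [NormedRing A] [StarRing A] [CStarRing A] [CompleteSpace A]
    [NormedAlgebra ℂ A] [StarModule ℂ A] [PartialOrder A] [StarOrderedRing A]
    -- the increasing sequence of finite-dimensional unital C*-subalgebras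
    (B : ℕ → StarSubalgebra ℂ A)
    (hBmono : ∀ N : ℕ, B N ≤ B (N + 1))
    (hBfd : ∀ N : ℕ, FiniteDimensional ℂ (B N))
    -- Bc is the norm closure of the union of the B_N, assumed simple
    (Bc : StarSubalgebra ℂ A)
    (hBc : (Bc : Set A) = closure (⋃ N : ℕ, (B N : Set A)))
    (hBsimple : ∀ I : TwoSidedIdeal Bc, IsClosed (I : Set Bc) → I = ⊥ ∨ I = ⊤)
    -- the isometry s and the projection p = ss*
    (s : A) (hs : star s * s = 1)
    (p : A) (hp : p = s * star s) (hpne : p ≠ 1) (hpB1 : p ∈ B 1)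
    (hsBN : ∀ N : ℕ, ∀ b ∈ B N, s * b * star s ∈ B (N + 1))
    (hpBNp : ∀ N : ℕ, ∀ b ∈ B N, ∃ c ∈ B (N + 1), p * b * p = s * c * star s)
    (hsBc : ∀ b ∈ Bc, ∃ c ∈ Bc, s * b * star s = p * c * p)
    (hpBcp : ∀ b ∈ Bc, ∃ c ∈ Bc, p * b * p = s * c * star s)
    -- A is generated as a C*-algebra by Bc together with s
    (hgen : (StarAlgebra.adjoin ℂ ((Bc : Set A) ∪ {s})).topologicalClosure = ⊤)
    -- A is simple and purely infinite
    (hAsimple : ∀ I : TwoSidedIdeal A, IsClosed (I : Set A) → I = ⊥ ∨ I = ⊤)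
    (hApi : ∀ a : A, 0 ≤ a → a ≠ 0 → ∃ x : A, x * a * star x = 1)
    -- the elements a_1, ..., a_r of B_1 and the map σ
    {r : ℕ} (a : Fin r → A) (haB1 : ∀ i, a i ∈ B 1)
    (hasum : ∑ i, a i * p * star (a i) = 1)
    (hap : ∀ i, a i * p = a i)
    (σ : A → A)
    (hσ : ∀ x : A, σ x = ∑ i, a i * (s * x * star s) * star (a i))
    -- the minimal central projections of B N, summing to 1
    (N : ℕ) (hN : 1 ≤ N) (J : ℕ) (P : Fin J → A)
    (hPmem : ∀ j, P j ∈ B N)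
    (hPproj : ∀ j, IsSelfAdjoint (P j) ∧ P j * P j = P j ∧ P j ≠ 0)
    (hPcentral : ∀ j, ∀ b ∈ B N, P j * b = b * P j)
    (hPmin : ∀ j, ∀ z ∈ B N, IsSelfAdjoint z → z * z = z →
      (∀ b ∈ B N, z * b = b * z) → z * P j = z → z = 0 ∨ z = P j)
    (hPsum : ∑ j, P j = 1)
    :
    ∃ N₁ : ℕ, N ≤ N₁ ∧
      ∀ l : ℕ, ∀ q : A, IsSelfAdjoint q → q * q = q → q ≠ 0 →
        (∀ b ∈ B (N₁ + l), q * b = b * q) →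
        ∀ j, P j * σ^[l] q * P j ≠ 0 := by
  classical
  -- monotonicity of the tower
  have hBle : Monotone B := monotone_nat_of_le_succ hBmono
  -- basic identities
  have hpsA : p * s = s := by rw [hp, mul_assoc, hs, mul_one]
  have hpstar : star p = p := by rw [hp, star_mul, star_star]
  have hspA : star s * p = star s := by rw [hp, ← mul_assoc, hs, one_mul]
  have hcl : ∀ w : A, star s * (s * w) = w := fun w => by rw [← mul_assoc, hs, one_mul]
  have hpsw : ∀ w : A, p * (s * w) = s * w := fun w => by rw [← mul_assoc, hpsA]
  have hspw : ∀ w : A, star s * (p * w) = star s * w := fun w => by rw [← mul_assoc, hspA]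
  have hpp : p * p = p := by rw [hp]; simp only [mul_assoc]; rw [hcl]
  have hppw : ∀ w : A, p * (p * w) = p * w := fun w => by rw [← mul_assoc, hpp]
  have hpa : ∀ i, p * star (a i) = star (a i) := fun i => by
    rw [← hpstar, ← star_mul, hap i]
  have hapw : ∀ i, ∀ w : A, a i * (p * w) = a i * w := fun i w => by
    rw [← mul_assoc, hap i]
  have hpaw : ∀ i, ∀ w : A, p * (star (a i) * w) = star (a i) * w := fun i w => by
    rw [← mul_assoc, hpa i]
  have hsum1 : ∑ i, a i * star (a i) = 1 := by
    rw [← hasum]; exact Finset.sum_congr rfl fun i _ => by rw [hap i]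
  have hca : ∀ {x y : A}, x * y = y * x → ∀ w : A, x * (y * w) = y * (x * w) :=
    fun h w => by rw [← mul_assoc, h, mul_assoc]
  -- the swap lemma
  have hswap : ∀ M : ℕ, ∀ q : A, (∀ b ∈ B (M + 1), q * b = b * q) →
      ∀ c ∈ B M, ∀ w : A,
        (s * q * star s) * (p * (c * (p * w))) = p * (c * (p * ((s * q * star s) * w))) := by
    intro M q hq c hc w
    obtain ⟨d, hd, hdeq⟩ := hpBNp M c hc
    have h1 : ∀ w : A, p * (c * (p * w)) = s * (d * (star s * w)) := by
      intro w
      calc p * (c * (p * w)) = (p * c * p) * w := by simp only [mul_assoc]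
      _ = s * (d * (star s * w)) := by rw [hdeq]; simp only [mul_assoc]
    have hqd : q * d = d * q := hq d hd
    rw [h1, h1]
    calc s * q * star s * (s * (d * (star s * w)))
        = s * (q * (d * (star s * w))) := by simp only [mul_assoc]; rw [hcl]
      _ = s * (d * (q * (star s * w))) := by rw [hca hqd]
      _ = s * (d * (star s * (s * (q * (star s * w))))) := by rw [hcl]
      _ = s * (d * (star s * (s * q * star s * w))) := by simp only [mul_assoc]
  -- commutant descent
  have hdesc : ∀ M : ℕ, 1 ≤ M → ∀ q : A, (∀ b ∈ B (M + 1), q * b = b * q) →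
      ∀ b ∈ B M, σ q * b = b * σ q := by
    intro M hM q hq b hb
    have hmem1 : ∀ i, a i ∈ B M := fun i => hBle hM (haB1 i)
    have key : ∀ i k, a i * (s * q * star s) * star (a i) * b * (a k * star (a k))
        = a i * star (a i) * (b * (a k * (s * q * star s) * star (a k))) := by
      intro i k
      have hc : star (a i) * b * a k ∈ B M :=
        mul_mem (mul_mem (star_mem (hmem1 i)) hb) (hmem1 k)
      have h2 := hswap M q hq _ hc (star (a k))
      simp only [mul_assoc] at h2 ⊢
      calc a i * (s * (q * (star s * (star (a i) * (b * (a k * star (a k)))))))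
          = a i * (s * (q * (star s * (p * (star (a i) * (b * (a k * (p * star (a k))))))))) := by
            conv_rhs => rw [hpaw i, hpa k]
        _ = a i * (p * (star (a i) * (b * (a k * (p * (s * (q * (star s * star (a k))))))))) := by
            rw [h2]
        _ = a i * (star (a i) * (b * (a k * (s * (q * (star s * star (a k))))))) := by
            rw [hapw i, hpsw]
    rw [hσ q, Finset.sum_mul, Finset.mul_sum]
    calc ∑ i, a i * (s * q * star s) * star (a i) * b
        = ∑ i, ∑ k, a i * (s * q * star s) * star (a i) * b * (a k * star (a k)) := by
          refine Finset.sum_congr rfl fun i _ => ?_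
          rw [← Finset.mul_sum, hsum1, mul_one]
      _ = ∑ i, ∑ k, a i * star (a i) * (b * (a k * (s * q * star s) * star (a k))) :=
          Finset.sum_congr rfl fun i _ => Finset.sum_congr rfl fun k _ => key i k
      _ = ∑ k, ∑ i, a i * star (a i) * (b * (a k * (s * q * star s) * star (a k))) :=
          Finset.sum_comm
      _ = ∑ k, b * (a k * (s * q * star s) * star (a k)) := by
          refine Finset.sum_congr rfl fun k _ => ?_
          rw [← Finset.sum_mul, hsum1, one_mul]
  -- injectivity : star s * σ q * s = q
  have hinj : ∀ M : ℕ, 1 ≤ M → ∀ q : A, (∀ b ∈ B (M + 1), q * b = b * q) →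
      star s * σ q * s = q := by
    intro M hM q hq
    choose e he heq using fun i => hpBNp 1 (a i) (haB1 i)
    have heq' : ∀ i, p * star (a i) * p = s * star (e i) * star s := by
      intro i
      have h0 := congrArg star (heq i)
      simp only [star_mul, star_star, hpstar] at h0
      simp only [mul_assoc]
      exact h0
    have hpe : ∀ i, ∀ w : A, p * (a i * (p * w)) = s * (e i * (star s * w)) := by
      intro i w
      calc p * (a i * (p * w)) = (p * a i * p) * w := by simp only [mul_assoc]
        _ = s * (e i * (star s * w)) := by rw [heq i]; simp only [mul_assoc]
    have hpe' : ∀ i, ∀ w : A, p * (star (a i) * (p * w)) = s * (star (e i) * (star s * w)) := by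
      intro i w
      calc p * (star (a i) * (p * w)) = (p * star (a i) * p) * w := by simp only [mul_assoc]
        _ = s * (star (e i) * (star s * w)) := by rw [heq' i]; simp only [mul_assoc]
    have hse : ∀ i, star s * (star (a i) * s) = star (e i) := by
      intro i
      calc star s * (star (a i) * s)
          = star s * (p * (star (a i) * (p * s))) := by conv_rhs => rw [hspw, hpsA]
        _ = star s * (s * (star (e i) * (star s * s))) := by rw [hpe' i]
        _ = star (e i) := by rw [hs, mul_one, hcl]
    have hterm : ∀ i, star s * (a i * (s * q * star s) * star (a i)) * s
        = e i * star (e i) * q := by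
      intro i
      have hqe : q * star (e i) = star (e i) * q :=
        hq (star (e i)) (star_mem (hBle (by omega : 2 ≤ M + 1) (he i)))
      calc star s * (a i * (s * q * star s) * star (a i)) * s
          = star s * (a i * (s * (q * (star s * (star (a i) * s))))) := by
            simp only [mul_assoc]
        _ = star s * (p * (a i * (p * (s * (q * (star s * (star (a i) * s))))))) := by
            conv_rhs => rw [hspw, hapw i]
        _ = star s * (s * (e i * (star s * (s * (q * (star s * (star (a i) * s))))))) := by
            rw [hpe i]
        _ = e i * (q * (star s * (star (a i) * s))) := by rw [hcl, hcl]
        _ = e i * (q * star (e i)) := by rw [hse i]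
        _ = e i * star (e i) * q := by rw [hqe, ← mul_assoc]
    have hE1 : s * (∑ i, e i * star (e i)) * star s = p := by
      have hterm2 : ∀ i, s * (e i * star (e i)) * star s
          = p * (a i * p * star (a i) * p) := by
        intro i
        have hsplit : s * (e i * star (e i)) * star s
            = (s * e i * star s) * (s * star (e i) * star s) := by
          simp only [mul_assoc]; rw [hcl]
        rw [hsplit, ← heq i, ← heq' i]
        simp only [mul_assoc]
        rw [hppw]
      calc s * (∑ i, e i * star (e i)) * star s
          = ∑ i, s * (e i * star (e i)) * star s := by
            rw [Finset.mul_sum, Finset.sum_mul]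
        _ = ∑ i, p * (a i * p * star (a i) * p) := Finset.sum_congr rfl fun i _ => hterm2 i
        _ = p * (∑ i, a i * p * star (a i)) * p := by
            rw [Finset.mul_sum, Finset.sum_mul]
            exact Finset.sum_congr rfl fun i _ => by simp only [mul_assoc]
        _ = p := by rw [hasum, mul_one, hpp]
    have hE : (∑ i, e i * star (e i)) = 1 := by
      have h0 : (∑ i, e i * star (e i))
          = star s * (s * (∑ i, e i * star (e i)) * star s) * s := by
        simp only [mul_assoc]; rw [hs, mul_one, hcl]
      rw [h0, hE1, hspA, hs]
    calc star s * σ q * s = ∑ i, star s * (a i * (s * q * star s) * star (a i)) * s := by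
          rw [hσ q, Finset.mul_sum, Finset.sum_mul]
      _ = ∑ i, e i * star (e i) * q := Finset.sum_congr rfl fun i _ => hterm i
      _ = (∑ i, e i * star (e i)) * q := by rw [← Finset.sum_mul]
      _ = q := by rw [hE, one_mul]
  -- membership of the tower in Bc
  have hBcmem : ∀ M : ℕ, ∀ b : A, b ∈ B M → b ∈ Bc := by
    intro M b hb
    have : b ∈ (Bc : Set A) := by
      rw [hBc]; exact subset_closure (Set.mem_iUnion.mpr ⟨M, hb⟩)
    exact this
  -- for each j, find a level M and an element of the ideal-span at level M close to 1
  have hjapprox : ∀ j : Fin J, ∃ Mj : ℕ, ∃ u : A,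
      u ∈ Submodule.span ℂ {w : A | ∃ x ∈ B Mj, ∃ y ∈ B Mj, w = x * P j * y} ∧
      ‖(1 : A) - u‖ < 1 := by
    intro j
    have hPj : P j ∈ Bc := hBcmem N (P j) (hPmem j)
    set G : Set A := {w : A | ∃ x ∈ Bc, ∃ y ∈ Bc, w = x * P j * y} with hG
    set K := (Submodule.span ℂ G).topologicalClosure with hK
    have hml : ∀ z ∈ Bc, ∀ w ∈ Submodule.span ℂ G, z * w ∈ Submodule.span ℂ G := by
      intro z hz w hw
      induction hw using Submodule.span_induction with
      | mem w hw =>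
        obtain ⟨x, hx, y, hy, rfl⟩ := hw
        exact Submodule.subset_span ⟨z * x, mul_mem hz hx, y, hy, by simp only [mul_assoc]⟩
      | zero => rw [mul_zero]; exact Submodule.zero_mem _
      | add u v _ _ ihu ihv => rw [mul_add]; exact Submodule.add_mem _ ihu ihv
      | smul c u _ ihu => rw [mul_smul_comm]; exact Submodule.smul_mem _ _ ihu
    have hmr : ∀ z ∈ Bc, ∀ w ∈ Submodule.span ℂ G, w * z ∈ Submodule.span ℂ G := by
      intro z hz w hw
      induction hw using Submodule.span_induction with
      | mem w hw =>
        obtain ⟨x, hx, y, hy, rfl⟩ := hw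
        exact Submodule.subset_span ⟨x, hx, y * z, mul_mem hy hz, by simp only [mul_assoc]⟩
      | zero => rw [zero_mul]; exact Submodule.zero_mem _
      | add u v _ _ ihu ihv => rw [add_mul]; exact Submodule.add_mem _ ihu ihv
      | smul c u _ ihu => rw [smul_mul_assoc]; exact Submodule.smul_mem _ _ ihu
    have hKl : ∀ z ∈ Bc, ∀ w ∈ K, z * w ∈ K := by
      intro z hz w hw
      have hw' : w ∈ closure (Submodule.span ℂ G : Set A) := by
        rw [← Submodule.topologicalClosure_coe]; exact hw
      have h2 : z * w ∈ closure (Submodule.span ℂ G : Set A) :=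
        map_mem_closure (continuous_mul_left z) hw' (fun u hu => hml z hz u hu)
      rw [← SetLike.mem_coe, Submodule.topologicalClosure_coe]
      exact h2
    have hKr : ∀ z ∈ Bc, ∀ w ∈ K, w * z ∈ K := by
      intro z hz w hw
      have hw' : w ∈ closure (Submodule.span ℂ G : Set A) := by
        rw [← Submodule.topologicalClosure_coe]; exact hw
      have h2 : w * z ∈ closure (Submodule.span ℂ G : Set A) :=
        map_mem_closure (f := fun u => u * z) (continuous_mul_right z) hw'
          (fun u hu => hmr z hz u hu)
      rw [← SetLike.mem_coe, Submodule.topologicalClosure_coe]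
      exact h2
    obtain ⟨I, hIcoe⟩ : ∃ I : TwoSidedIdeal Bc, (I : Set Bc) = {z : Bc | (z : A) ∈ K} :=
      ⟨TwoSidedIdeal.mk' {z : Bc | (z : A) ∈ K}
        (by show ((0 : Bc) : A) ∈ K; simpa using K.zero_mem)
        (fun {x y} hx hy => by
          show ((x + y : Bc) : A) ∈ K
          exact K.add_mem hx hy)
        (fun {x} hx => by
          show ((-x : Bc) : A) ∈ K
          exact K.neg_mem hx)
        (fun {x y} hy => by
          show ((x * y : Bc) : A) ∈ K
          exact hKl (x : A) x.2 (y : A) hy)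
        (fun {x y} hx => by
          show ((x * y : Bc) : A) ∈ K
          exact hKr (y : A) y.2 (x : A) hx),
       TwoSidedIdeal.coe_mk' _ _ _ _ _ _⟩
    have hmemI : ∀ z : Bc, z ∈ I ↔ (z : A) ∈ K := by
      intro z
      rw [← SetLike.mem_coe, hIcoe]
      rfl
    have hIclosed : IsClosed (I : Set Bc) := by
      rw [hIcoe]
      have : {z : Bc | (z : A) ∈ K} = (Subtype.val) ⁻¹' (K : Set A) := rfl
      rw [this]
      exact (Submodule.isClosed_topologicalClosure _).preimage continuous_subtype_val
    rcases hBsimple I hIclosed with hbot | htop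
    · exfalso
      have hPmemI : (⟨P j, hPj⟩ : Bc) ∈ I := by
        rw [hmemI]
        exact Submodule.le_topologicalClosure _
          (Submodule.subset_span ⟨1, one_mem _, 1, one_mem _, by rw [one_mul, mul_one]⟩)
      rw [hbot, TwoSidedIdeal.mem_bot] at hPmemI
      exact (hPproj j).2.2 (congrArg Subtype.val hPmemI)
    · have h1K : (1 : A) ∈ closure (Submodule.span ℂ G : Set A) := by
        have h1I : (1 : Bc) ∈ I := htop ▸ TwoSidedIdeal.mem_top _
        rw [hmemI] at h1I
        rw [← Submodule.topologicalClosure_coe]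
        exact h1I
      obtain ⟨v, hv, hdv⟩ := Metric.mem_closure_iff.mp h1K (1/2) (by norm_num)
      rw [SetLike.mem_coe] at hv
      -- approximate span elements at finite levels
      have happ : ∀ v ∈ Submodule.span ℂ G, ∀ ε : ℝ, 0 < ε →
          ∃ M : ℕ, ∃ u ∈ Submodule.span ℂ
              {w : A | ∃ x ∈ B M, ∃ y ∈ B M, w = x * P j * y}, ‖v - u‖ < ε := by
        intro v hv
        induction hv using Submodule.span_induction with
        | mem w hw =>
          intro ε hε
          obtain ⟨x, hx, y, hy, rfl⟩ := hw
          have hxcl : x ∈ closure (⋃ M : ℕ, (B M : Set A)) := by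
            rw [← hBc]; exact hx
          have hycl : y ∈ closure (⋃ M : ℕ, (B M : Set A)) := by
            rw [← hBc]; exact hy
          set D : ℝ := ‖P j‖ * ‖y‖ + (‖x‖ + 1) * ‖P j‖ with hD
          have hD0 : 0 ≤ D := by positivity
          set δ : ℝ := min 1 (ε / (D + 1)) with hδ
          have hδ0 : 0 < δ := lt_min one_pos (div_pos hε (by linarith))
          have hδ1 : δ ≤ 1 := min_le_left _ _
          have hδε : δ * (D + 1) ≤ ε := by
            calc δ * (D + 1) ≤ (ε / (D + 1)) * (D + 1) :=
                  mul_le_mul_of_nonneg_right (min_le_right _ _) (by linarith)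
              _ = ε := div_mul_cancel₀ ε (by linarith)
          obtain ⟨x', hx', hdx⟩ := Metric.mem_closure_iff.mp hxcl δ hδ0
          obtain ⟨y', hy', hdy⟩ := Metric.mem_closure_iff.mp hycl δ hδ0
          obtain ⟨M₁, hM₁⟩ := Set.mem_iUnion.mp hx'
          obtain ⟨M₂, hM₂⟩ := Set.mem_iUnion.mp hy'
          refine ⟨max M₁ M₂, x' * P j * y', Submodule.subset_span
            ⟨x', hBle (le_max_left _ _) hM₁, y', hBle (le_max_right _ _) hM₂, rfl⟩, ?_⟩
          rw [dist_eq_norm] at hdx hdy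
          have hx'n : ‖x'‖ ≤ ‖x‖ + 1 := by
            have h1 : ‖x'‖ - ‖x‖ ≤ ‖x' - x‖ := norm_sub_norm_le _ _
            have h2 : ‖x' - x‖ = ‖x - x'‖ := norm_sub_rev _ _
            linarith
          have hsplit : x * P j * y - x' * P j * y'
              = (x - x') * (P j * y) + (x' * P j) * (y - y') := by
            noncomm_ring
          have f1 : ‖(x - x') * (P j * y)‖ ≤ ‖x - x'‖ * (‖P j‖ * ‖y‖) :=
            le_trans (norm_mul_le _ _)
              (mul_le_mul_of_nonneg_left (norm_mul_le _ _) (norm_nonneg _))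
          have f2 : ‖(x' * P j) * (y - y')‖ ≤ ‖x'‖ * ‖P j‖ * ‖y - y'‖ :=
            le_trans (norm_mul_le _ _)
              (mul_le_mul_of_nonneg_right (norm_mul_le _ _) (norm_nonneg _))
          have e1 : ‖x - x'‖ * (‖P j‖ * ‖y‖) ≤ δ * (‖P j‖ * ‖y‖) :=
            mul_le_mul_of_nonneg_right hdx.le (by positivity)
          have e2 : ‖x'‖ * ‖P j‖ * ‖y - y'‖ ≤ ((‖x‖ + 1) * ‖P j‖) * δ :=
            mul_le_mul (mul_le_mul_of_nonneg_right hx'n (norm_nonneg _)) hdy.le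
              (norm_nonneg _) (by positivity)
          have e3 : δ * (‖P j‖ * ‖y‖) + ((‖x‖ + 1) * ‖P j‖) * δ = δ * D := by
            rw [hD]; ring
          have e4 : δ * (D + 1) = δ * D + δ := by ring
          have g := norm_add_le ((x - x') * (P j * y)) ((x' * P j) * (y - y'))
          rw [← hsplit] at g
          linarith
        | zero =>
          intro ε hε
          exact ⟨0, 0, Submodule.zero_mem _, by simpa using hε⟩
        | add v w _ _ ihv ihw =>
          intro ε hε
          obtain ⟨M₁, u₁, hu₁, h1⟩ := ihv (ε/2) (by linarith)
          obtain ⟨M₂, u₂, hu₂, h2⟩ := ihw (ε/2) (by linarith)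
          have hsub1 : {w : A | ∃ x ∈ B M₁, ∃ y ∈ B M₁, w = x * P j * y}
              ⊆ {w : A | ∃ x ∈ B (max M₁ M₂), ∃ y ∈ B (max M₁ M₂), w = x * P j * y} := by
            rintro w ⟨x, hx, y, hy, rfl⟩
            exact ⟨x, hBle (le_max_left _ _) hx, y, hBle (le_max_left _ _) hy, rfl⟩
          have hsub2 : {w : A | ∃ x ∈ B M₂, ∃ y ∈ B M₂, w = x * P j * y}
              ⊆ {w : A | ∃ x ∈ B (max M₁ M₂), ∃ y ∈ B (max M₁ M₂), w = x * P j * y} := by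
            rintro w ⟨x, hx, y, hy, rfl⟩
            exact ⟨x, hBle (le_max_right _ _) hx, y, hBle (le_max_right _ _) hy, rfl⟩
          refine ⟨max M₁ M₂, u₁ + u₂, Submodule.add_mem _
            (Submodule.span_mono hsub1 hu₁) (Submodule.span_mono hsub2 hu₂), ?_⟩
          have h3 : v + w - (u₁ + u₂) = (v - u₁) + (w - u₂) := by abel
          rw [h3]
          calc ‖(v - u₁) + (w - u₂)‖ ≤ ‖v - u₁‖ + ‖w - u₂‖ := norm_add_le _ _
            _ < ε := by linarith
        | smul c v _ ihv =>
          intro ε hε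
          have hc1 : (0:ℝ) < ‖c‖ + 1 := by positivity
          obtain ⟨M₁, u₁, hu₁, h1⟩ := ihv (ε / (‖c‖ + 1)) (by positivity)
          refine ⟨M₁, c • u₁, Submodule.smul_mem _ _ hu₁, ?_⟩
          rw [← smul_sub, norm_smul]
          calc ‖c‖ * ‖v - u₁‖ ≤ ‖c‖ * (ε / (‖c‖ + 1)) :=
                mul_le_mul_of_nonneg_left h1.le (norm_nonneg _)
            _ < (‖c‖ + 1) * (ε / (‖c‖ + 1)) :=
                mul_lt_mul_of_pos_right (lt_add_one _) (by positivity)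
            _ = ε := mul_div_cancel₀ ε (by linarith)
      obtain ⟨M₁, u, hu, hvu⟩ := happ v hv (1/2) (by norm_num)
      refine ⟨M₁, u, hu, ?_⟩
      have hd : dist (1 : A) u ≤ dist (1 : A) v + dist v u := dist_triangle _ _ _
      simp only [dist_eq_norm] at hd hdv
      linarith [hdv, hvu, hd]
  choose M₀ u₀ hu₀span hu₀norm using hjapprox
  refine ⟨max (max N 2) (Finset.univ.sup M₀),
    le_trans (le_max_left N 2) (le_max_left _ _), ?_⟩
  set N₁ := max (max N 2) (Finset.univ.sup M₀) with hN₁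
  have hNN₁ : N ≤ N₁ := le_trans (le_max_left N 2) (le_max_left _ _)
  have h2N₁ : 2 ≤ N₁ := le_trans (le_max_right N 2) (le_max_left _ _)
  intro l q _ _ hq0 hqcomm j
  have hMj : M₀ j ≤ N₁ := le_trans (Finset.le_sup (Finset.mem_univ j)) (le_max_right _ _)
  -- iterate σ
  have hiter : ∀ k : ℕ, ∀ q : A, q ≠ 0 → (∀ b ∈ B (N₁ + k), q * b = b * q) →
      σ^[k] q ≠ 0 ∧ ∀ b ∈ B N₁, σ^[k] q * b = b * σ^[k] q := by
    intro k
    induction k with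
    | zero => intro q h0 hc; exact ⟨h0, hc⟩
    | succ k ih =>
      intro q h0 hc
      have hM1 : 1 ≤ N₁ + k := le_trans (by omega) (Nat.le_add_right N₁ k)
      have hc' : ∀ b ∈ B ((N₁ + k) + 1), q * b = b * q := hc
      have hne : σ q ≠ 0 := by
        intro h
        apply h0
        have h3 := hinj (N₁ + k) hM1 q hc'
        rw [h, mul_zero, zero_mul] at h3
        exact h3.symm
      have hcm : ∀ b ∈ B (N₁ + k), σ q * b = b * σ q := hdesc (N₁ + k) hM1 q hc'
      rw [Function.iterate_succ_apply]
      exact ih (σ q) hne hcm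
  obtain ⟨hql0, hqlc⟩ := hiter l q hq0 hqcomm
  intro hcontra
  have hPc : σ^[l] q * P j = P j * σ^[l] q := hqlc (P j) (hBle hNN₁ (hPmem j))
  have hqP : σ^[l] q * P j = 0 := by
    calc σ^[l] q * P j = σ^[l] q * (P j * P j) := by rw [(hPproj j).2.1]
      _ = σ^[l] q * P j * P j := by rw [mul_assoc]
      _ = P j * σ^[l] q * P j := by rw [hPc]
      _ = 0 := hcontra
  have hannihil : σ^[l] q * u₀ j = 0 := by
    have hgen : ∀ u ∈ Submodule.span ℂ
        {w : A | ∃ x ∈ B (M₀ j), ∃ y ∈ B (M₀ j), w = x * P j * y},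
        σ^[l] q * u = 0 := by
      intro u hsp
      induction hsp using Submodule.span_induction with
      | mem w hw =>
        obtain ⟨x, hx, y, hy, rfl⟩ := hw
        have hqx : σ^[l] q * x = x * σ^[l] q := hqlc x (hBle hMj hx)
        calc σ^[l] q * (x * P j * y) = σ^[l] q * x * P j * y := by simp only [mul_assoc]
          _ = x * σ^[l] q * P j * y := by rw [hqx]
          _ = x * (σ^[l] q * P j) * y := by rw [mul_assoc x]
          _ = 0 := by rw [hqP, mul_zero, zero_mul]
      | zero => rw [mul_zero]
      | add v w _ _ ihv ihw => rw [mul_add, ihv, ihw, add_zero]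
      | smul c w _ ihw => rw [mul_smul_comm, ihw, smul_zero]
    exact hgen (u₀ j) (hu₀span j)
  have hqlnorm : 0 < ‖σ^[l] q‖ := norm_pos_iff.mpr hql0
  have hle : ‖σ^[l] q‖ ≤ ‖σ^[l] q‖ * ‖(1 : A) - u₀ j‖ := by
    calc ‖σ^[l] q‖ = ‖σ^[l] q * ((1 : A) - u₀ j)‖ := by
          rw [mul_sub, mul_one, hannihil, sub_zero]
      _ ≤ ‖σ^[l] q‖ * ‖(1 : A) - u₀ j‖ := norm_mul_le _ _
  nlinarith [hu₀norm j]
end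

section
/- Let α be an approximately inner automorphism of a unital purely infinite simple C*-algebra A, and let (p_j)_{j∈ℕ} be a uniformly central sequence of projections in A. Then for every ε > 0 and every finite-dimensional unital C*-subalgebra F of A there exist j ∈ ℕ and a partial isometry w ∈ A such that w*w = p_j, ‖ww* − α(p_j)‖ < ε, and ‖wx − xw‖ ≤ ε‖x‖ for all x ∈ F. -/
private lemma conj_norm_eq {A : Type*} [NormedRing A] [StarRing A] [CStarRing A]
    {u : A} (hu : u ∈ unitary A) (a : A) : ‖u * a * star u‖ = ‖a‖ := by
  rw [CStarRing.norm_mul_mem_unitary _ (Unitary.star_mem hu),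
    CStarRing.norm_mem_unitary_mul a hu]

set_option linter.unusedVariables false in
set_option maxHeartbeats 1000000 in
set_option synthInstance.maxHeartbeats 400000 in
/-- Let `α` be an approximately inner automorphism of a unital purely infinite
simple C*-algebra `A` (of dimension at least two), and let `(p_j)` be a
uniformly central sequence of projections in `A`. Then for every `ε > 0` and
every finite-dimensional unital C*-subalgebra `F` of `A` there exist `j ∈ ℕ`
and a partial isometry `w ∈ A` with `w* w = p_j`, `‖w w* - α (p_j)‖ < ε`, and
`‖w x - x w‖ ≤ ε ‖x‖` for all `x ∈ F`. -/
theorem exists_partial_isometry_almost_central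
    {A : Type*} [NormedRing A] [StarRing A] [CStarRing A] [CompleteSpace A]
    [NormedAlgebra ℂ A] [StarModule ℂ A] [PartialOrder A] [StarOrderedRing A]
    -- A has dimension at least two
    (hdim : 2 ≤ Module.rank ℂ A)
    -- A is simple
    (hAsimple : ∀ I : TwoSidedIdeal A, IsClosed (I : Set A) → I = ⊥ ∨ I = ⊤)
    -- A is purely infinite
    (hApi : ∀ a : A, 0 ≤ a → a ≠ 0 → ∃ x : A, x * a * star x = 1)
    -- α is an approximately inner automorphism of A
    (α : A ≃ₐ[ℂ] A) (hαstar : ∀ x : A, α (star x) = star (α x))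
    (hαai : ∀ (F : Finset A) (ε : ℝ), 0 < ε →
      ∃ u ∈ unitary A, ∀ x ∈ F, ‖α x - u * x * star u‖ < ε)
    -- (p_j) is a uniformly central sequence of projections in A
    (P : ℕ → A)
    (hPproj : ∀ j, IsSelfAdjoint (P j) ∧ P j * P j = P j)
    (hPcentral : ∀ x : A,
      Filter.Tendsto (fun j => ‖P j * x - x * P j‖) Filter.atTop (nhds 0))
    :
    ∀ ε : ℝ, 0 < ε → ∀ F : StarSubalgebra ℂ A, FiniteDimensional ℂ F →
      ∃ (j : ℕ) (w : A),
        star w * w = P j ∧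
        ‖w * star w - α (P j)‖ < ε ∧
        ∀ x ∈ F, ‖w * x - x * w‖ ≤ ε * ‖x‖ := by
  intro ε hε F hFfd
  classical
  letI : NormedAlgebra ℂ F := inferInstance
  letI : NormedSpace ℂ F := NormedAlgebra.toNormedSpace (𝕜 := ℂ) (𝕜' := F)
  -- basis of F and coordinate functionals
  set n := Module.finrank ℂ F with hn
  let b : Module.Basis (Fin n) ℂ F := Module.finBasis ℂ F
  let y : Fin n → A := fun i => (b i : A)
  let g : Fin n → (F →L[ℂ] ℂ) := fun i => LinearMap.toContinuousLinearMap (b.coord i)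
  set S : ℝ := ∑ i, ‖g i‖ with hS
  have hS0 : 0 ≤ S := Finset.sum_nonneg fun i _ => norm_nonneg _
  set C : ℝ := S + 1 with hC
  have hC1 : (1:ℝ) ≤ C := by rw [hC]; linarith
  have hC0 : (0:ℝ) < C := lt_of_lt_of_le one_pos hC1
  set δ : ℝ := ε / (3 * C) with hδdef
  have hδ : 0 < δ := div_pos hε (by positivity)
  have hδ3 : δ ≤ ε / 3 := by
    rw [hδdef]
    exact div_le_div_of_nonneg_left hε.le (by norm_num) (by linarith)
  -- Step 1: a unitary v approximately implementing α⁻¹ on the basis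
  obtain ⟨u₀, hu₀, hu₀spec⟩ :=
    hαai (Finset.image (fun i => α.symm (y i)) Finset.univ) δ hδ
  have hu₀1 : star u₀ * u₀ = 1 := (Unitary.mem_iff.mp hu₀).1
  set v : A := star u₀ with hvdef
  have hv : v ∈ unitary A := Unitary.star_mem hu₀
  have hv1 : star v * v = 1 := (Unitary.mem_iff.mp hv).1
  have hv2 : v * star v = 1 := (Unitary.mem_iff.mp hv).2
  have hvspec : ∀ i, ‖α.symm (y i) - v * y i * star v‖ < δ := by
    intro i
    have h1 := hu₀spec (α.symm (y i)) (Finset.mem_image_of_mem _ (Finset.mem_univ i))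
    rw [α.apply_symm_apply] at h1
    have h2 : star u₀ * (y i - u₀ * α.symm (y i) * star u₀) * star (star u₀)
        = -(α.symm (y i) - v * y i * star v) := by
      rw [hvdef, star_star]
      have : star u₀ * (u₀ * α.symm (y i) * star u₀) * u₀
          = (star u₀ * u₀) * α.symm (y i) * (star u₀ * u₀) := by noncomm_ring
      rw [mul_sub, sub_mul, this, hu₀1, one_mul, mul_one, neg_sub]
    calc ‖α.symm (y i) - v * y i * star v‖
        = ‖star u₀ * (y i - u₀ * α.symm (y i) * star u₀) * star (star u₀)‖ := by
          rw [h2, norm_neg]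
      _ = ‖y i - u₀ * α.symm (y i) * star u₀‖ := conj_norm_eq (Unitary.star_mem hu₀) _
      _ < δ := h1
  -- Step 2: choose j such that P j almost commutes with v and the basis
  have hev : ∀ᶠ j in Filter.atTop,
      (∀ i, ‖P j * y i - y i * P j‖ < δ) ∧ ‖P j * v - v * P j‖ < δ := by
    refine Filter.Eventually.and ?_ ((hPcentral v).eventually_lt_const hδ)
    rw [Filter.eventually_all]
    exact fun i => (hPcentral (y i)).eventually_lt_const hδ
  obtain ⟨j, hjy, hjv⟩ := hev.exists
  have hPsa : star (P j) = P j := (hPproj j).1.star_eq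
  have hPidem : P j * P j = P j := (hPproj j).2
  have hPnorm : ‖P j‖ ≤ 1 := by
    have := CStarRing.norm_star_mul_self (x := P j)
    rw [hPsa, hPidem] at this
    nlinarith [norm_nonneg (P j)]
  -- Step 3: a unitary u approximately implementing α on {P j} ∪ α⁻¹(basis)
  obtain ⟨u, hu, huspec⟩ :=
    hαai (insert (P j) (Finset.image (fun i => α.symm (y i)) Finset.univ)) δ hδ
  have hu1 : star u * u = 1 := (Unitary.mem_iff.mp hu).1
  set w : A := u * v * P j with hwdef
  -- per-basis-element commutator bound
  have key : ∀ i, ‖w * y i - y i * w‖ ≤ 3 * δ := by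
    intro i
    have hdec : w * y i - y i * w
        = u * (v * (P j * y i - y i * P j))
          + u * ((v * y i - α.symm (y i) * v) * P j)
          + (u * α.symm (y i) - y i * u) * (v * P j) := by
      rw [hwdef]
      noncomm_ring
    have t1 : ‖u * (v * (P j * y i - y i * P j))‖ ≤ δ := by
      rw [CStarRing.norm_mem_unitary_mul _ hu, CStarRing.norm_mem_unitary_mul _ hv]
      exact (hjy i).le
    have hA2 : ‖v * y i - α.symm (y i) * v‖ ≤ δ := by
      have e : (α.symm (y i) - v * y i * star v) * v = α.symm (y i) * v - v * y i := by
        rw [sub_mul, mul_assoc, mul_assoc, hv1, mul_one]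
      calc ‖v * y i - α.symm (y i) * v‖
          = ‖α.symm (y i) * v - v * y i‖ := norm_sub_rev _ _
        _ = ‖(α.symm (y i) - v * y i * star v) * v‖ := by rw [e]
        _ = ‖α.symm (y i) - v * y i * star v‖ := CStarRing.norm_mul_mem_unitary _ hv
        _ ≤ δ := (hvspec i).le
    have t2 : ‖u * ((v * y i - α.symm (y i) * v) * P j)‖ ≤ δ := by
      rw [CStarRing.norm_mem_unitary_mul _ hu]
      calc ‖(v * y i - α.symm (y i) * v) * P j‖
          ≤ ‖v * y i - α.symm (y i) * v‖ * ‖P j‖ := norm_mul_le _ _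
        _ ≤ δ * 1 := mul_le_mul hA2 hPnorm (norm_nonneg _) hδ.le
        _ = δ := mul_one δ
    have hA3 : ‖u * α.symm (y i) - y i * u‖ ≤ δ := by
      have h1 := huspec (α.symm (y i))
        (Finset.mem_insert_of_mem (Finset.mem_image_of_mem _ (Finset.mem_univ i)))
      rw [α.apply_symm_apply] at h1
      have e : (y i - u * α.symm (y i) * star u) * u = y i * u - u * α.symm (y i) := by
        rw [sub_mul, mul_assoc, mul_assoc, hu1, mul_one]
      calc ‖u * α.symm (y i) - y i * u‖
          = ‖y i * u - u * α.symm (y i)‖ := norm_sub_rev _ _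
        _ = ‖(y i - u * α.symm (y i) * star u) * u‖ := by rw [e]
        _ = ‖y i - u * α.symm (y i) * star u‖ := CStarRing.norm_mul_mem_unitary _ hu
        _ ≤ δ := h1.le
    have t3 : ‖(u * α.symm (y i) - y i * u) * (v * P j)‖ ≤ δ := by
      calc ‖(u * α.symm (y i) - y i * u) * (v * P j)‖
          ≤ ‖u * α.symm (y i) - y i * u‖ * ‖v * P j‖ := norm_mul_le _ _
        _ ≤ δ * 1 := by
            apply mul_le_mul hA3 ?_ (norm_nonneg _) hδ.le
            rw [CStarRing.norm_mem_unitary_mul _ hv]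
            exact hPnorm
        _ = δ := mul_one δ
    calc ‖w * y i - y i * w‖
        ≤ ‖u * (v * (P j * y i - y i * P j))‖
          + ‖u * ((v * y i - α.symm (y i) * v) * P j)‖
          + ‖(u * α.symm (y i) - y i * u) * (v * P j)‖ := by
            rw [hdec]; exact norm_add₃_le
      _ ≤ δ + δ + δ := by gcongr
      _ = 3 * δ := by ring
  refine ⟨j, w, ?_, ?_, ?_⟩
  · -- star w * w = P j
    calc star w * w
        = P j * (star v * ((star u * u) * v)) * P j := by
          rw [hwdef]; simp only [star_mul, hPsa]; noncomm_ring
      _ = P j := by rw [hu1, one_mul, hv1, mul_one, hPidem]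
  · -- ‖w * star w - α (P j)‖ < ε
    have hww : w * star w = u * (v * P j * star v) * star u := by
      rw [hwdef]
      simp only [star_mul, hPsa]
      calc u * v * P j * (P j * (star v * star u))
          = u * (v * (P j * P j) * star v) * star u := by noncomm_ring
        _ = u * (v * P j * star v) * star u := by rw [hPidem]
    have h1 : ‖α (P j) - u * P j * star u‖ < δ :=
      huspec _ (Finset.mem_insert_self _ _)
    have h2 : ‖u * (v * P j * star v) * star u - u * P j * star u‖ ≤ δ := by
      have e0 : u * (v * P j * star v) * star u - u * P j * star u
          = u * (v * P j * star v - P j) * star u := by noncomm_ring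
      have e : v * P j * star v - P j = (v * P j - P j * v) * star v := by
        rw [sub_mul, mul_assoc, mul_assoc, hv2, mul_one]
      rw [e0, conj_norm_eq hu, e, CStarRing.norm_mul_mem_unitary _ (Unitary.star_mem hv),
        norm_sub_rev]
      exact hjv.le
    calc ‖w * star w - α (P j)‖
        ≤ ‖w * star w - u * P j * star u‖ + ‖u * P j * star u - α (P j)‖ :=
          norm_sub_le_norm_sub_add_norm_sub _ _ _
      _ ≤ δ + δ := by
          rw [hww, norm_sub_rev (u * P j * star u)]
          exact add_le_add h2 h1.le
      _ < ε := by linarith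
  · -- the commutator estimate on F
    intro x hx
    set z : F := ⟨x, hx⟩ with hzdef
    have hreprA : x = ∑ i, b.repr z i • y i := by
      have h0 : ∑ i, b.repr z i • b i = z := b.sum_repr z
      have := congrArg (F.subtype) h0
      have h3 := this.symm
      simp only [map_sum, map_smul] at h3
      exact h3
    have hcomm : w * x - x * w = ∑ i, b.repr z i • (w * y i - y i * w) := by
      conv_lhs => rw [hreprA]
      rw [Finset.mul_sum, Finset.sum_mul, ← Finset.sum_sub_distrib]
      refine Finset.sum_congr rfl fun i _ => ?_
      rw [mul_smul_comm, smul_mul_assoc, smul_sub]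
    have hcoord : ∀ i, ‖b.repr z i‖ ≤ ‖g i‖ * ‖x‖ := by
      intro i
      have h1 := (g i).le_opNorm z
      have h2 : (g i) z = b.repr z i := by
        simp [g, Module.Basis.coord_apply]
      rw [h2] at h1
      exact h1
    calc ‖w * x - x * w‖
        = ‖∑ i, b.repr z i • (w * y i - y i * w)‖ := by rw [hcomm]
      _ ≤ ∑ i, ‖b.repr z i • (w * y i - y i * w)‖ := norm_sum_le _ _
      _ ≤ ∑ i, (‖g i‖ * ‖x‖) * (3 * δ) := by
          refine Finset.sum_le_sum fun i _ => ?_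
          rw [norm_smul]
          exact mul_le_mul (hcoord i) (key i) (norm_nonneg _)
            (by positivity)
      _ = (3 * δ * S) * ‖x‖ := by
          rw [hS, Finset.mul_sum, Finset.sum_mul]
          exact Finset.sum_congr rfl fun i _ => by ring
      _ ≤ ε * ‖x‖ := by
          apply mul_le_mul_of_nonneg_right ?_ (norm_nonneg x)
          have e : 3 * δ * S = ε * (S / C) := by
            rw [hδdef]; field_simp
          rw [e]
          calc ε * (S / C) ≤ ε * 1 := by
                apply mul_le_mul_of_nonneg_left ?_ hε.le
                rw [div_le_one hC0]
                linarith
            _ = ε := mul_one ε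
end

section
/- Let A be a unital simple C*-algebra, ρ̂ a continuous action of the circle group 𝕋 on A, B its fixed-point algebra, and s ∈ A an isometry with ss* ≠ 1 and ρ̂_λ(s) = λ s for every λ ∈ 𝕋. Assume that every element c ∈ B with c*c = 1 or cc* = 1 is a unitary (B has no proper isometry and no proper coisometry). Let β be an automorphism of A commuting with ρ̂_λ for every λ ∈ 𝕋. If β is inner, say β = Ad v for a unitary v ∈ A, then v ∈ B. Consequently β maps B onto B, and if the restriction of β to B is not of the form Ad w for any unitary w ∈ B, then β is an outer automorphism of A. -/
open MeasureTheory Complex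

private lemma isom_pow {A : Type*} [Ring A] [StarRing A] {s : A} (hs : star s * s = 1) :
    ∀ m : ℕ, (star s) ^ m * s ^ m = 1
  | 0 => by simp
  | (m + 1) => by
    rw [pow_succ (star s) m, pow_succ' s m, mul_assoc, ← mul_assoc (star s) s (s ^ m), hs,
      one_mul, isom_pow hs m]

private lemma coisom_pow_false {A : Type*} [Ring A] [StarRing A] {s : A}
    (hs : star s * s = 1) (hss : s * star s ≠ 1) :
    ∀ k : ℕ, s ^ (k + 1) * (star s) ^ (k + 1) = 1 → False
  | 0, h => by rw [pow_one, pow_one] at h; exact hss h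
  | (k + 1), h => by
    apply coisom_pow_false hs hss k
    have e1 : star s * (s ^ (k + 1 + 1) * (star s) ^ (k + 1 + 1)) * s
        = (star s * s) * (s ^ (k + 1) * (star s) ^ (k + 1)) * (star s * s) := by
      rw [pow_succ' s (k + 1), pow_succ (star s) (k + 1)]
      noncomm_ring
    have e2 : star s * (s ^ (k + 1 + 1) * (star s) ^ (k + 1 + 1)) * s = 1 := by
      rw [h, mul_one, hs]
    rw [e1, hs, one_mul, mul_one] at e2
    exact e2

private theorem central_scalar {A : Type*} [CStarAlgebra A] [Nontrivial A]
    (hAsimple : ∀ I : TwoSidedIdeal A, IsClosed (I : Set A) → I = ⊥ ∨ I = ⊤)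
    (z : A) (hn : IsStarNormal z) (hc : ∀ x : A, z * x = x * z) :
    ∃ c : ℂ, z = algebraMap ℂ A c := by
  -- the center as a star subalgebra
  have hDstar : ∀ w : A, w ∈ Subalgebra.center ℂ A → star w ∈ Subalgebra.center ℂ A := by
    intro w hw
    rw [Subalgebra.mem_center_iff] at hw ⊢
    intro b
    calc b * star w = star (w * star b) := by rw [star_mul, star_star]
      _ = star (star b * w) := by rw [hw (star b)]
      _ = star w * b := by rw [star_mul, star_star]
  set D : StarSubalgebra ℂ A :=
    { toSubalgebra := Subalgebra.center ℂ A, star_mem' := fun hw => hDstar _ hw } with hD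
  have hDmem : ∀ w : A, w ∈ D ↔ ∀ b : A, b * w = w * b := by
    intro w
    rw [hD, ← StarSubalgebra.mem_toSubalgebra]
    exact Subalgebra.mem_center_iff
  have hDclosed : IsClosed (D : Set A) := by
    have : (D : Set A) = ⋂ b : A, {w : A | b * w = w * b} := by
      ext w
      simp only [SetLike.mem_coe, hDmem, Set.mem_iInter, Set.mem_setOf_eq]
    rw [this]
    exact isClosed_iInter fun b =>
      isClosed_eq (continuous_const.mul continuous_id) (continuous_id.mul continuous_const)
  -- everything in the image of the functional calculus is central
  have hzD : z ∈ D := (hDmem z).mpr fun b => (hc b).symm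
  have key : ∀ g : C(spectrum ℂ z, ℂ), cfcHom hn g ∈ D := by
    set X : C(spectrum ℂ z, ℂ) := ContinuousMap.restrict (spectrum ℂ z) (ContinuousMap.id ℂ)
      with hX
    have h1 : StarAlgebra.adjoin ℂ {X} ≤ StarSubalgebra.comap (cfcHom hn) D := by
      apply StarAlgebra.adjoin_le
      intro g hg
      rw [Set.mem_singleton_iff] at hg
      subst hg
      rw [SetLike.mem_coe, StarSubalgebra.mem_comap, cfcHom_id hn]
      exact hzD
    have h2 : IsClosed ((StarSubalgebra.comap (cfcHom hn) D : Set C(spectrum ℂ z, ℂ))) := by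
      have : (StarSubalgebra.comap (cfcHom hn) D : Set C(spectrum ℂ z, ℂ))
          = ⇑(cfcHom hn) ⁻¹' (D : Set A) := rfl
      rw [this]
      exact hDclosed.preimage (cfcHom_isClosedEmbedding hn).continuous
    have h3 : (StarAlgebra.adjoin ℂ ({X} : Set C(spectrum ℂ z, ℂ))).topologicalClosure = ⊤ := by
      apply ContinuousMap.starSubalgebra_topologicalClosure_eq_top_of_separatesPoints
      intro p q hpq
      refine ⟨_, ⟨X, StarAlgebra.subset_adjoin ℂ {X} rfl, rfl⟩, ?_⟩
      exact fun h => hpq (Subtype.ext h)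
    intro g
    have hg : g ∈ StarSubalgebra.comap (cfcHom hn) D :=
      StarSubalgebra.topologicalClosure_minimal h1 h2 (by rw [h3]; trivial)
    exact (StarSubalgebra.mem_comap _ _ _).mp hg
  have hcfc_central : ∀ f : ℂ → ℂ, ∀ x : A, cfc f z * x = x * cfc f z := by
    intro f x
    by_cases hf : ContinuousOn f (spectrum ℂ z)
    · rw [cfc_apply f z hn hf]
      exact ((hDmem _).mp (key _) x).symm
    · rw [cfc_apply_of_not_continuousOn z hf, zero_mul, mul_zero]
  -- main argument
  by_contra hcon
  push_neg at hcon
  obtain ⟨c₁, hc₁⟩ := spectrum.nonempty z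
  have hexists : ∃ c₂ ∈ spectrum ℂ z, c₂ ≠ c₁ := by
    by_contra h2
    push_neg at h2
    refine hcon c₁ ?_
    have heq : Set.EqOn (id : ℂ → ℂ) (fun _ => c₁) (spectrum ℂ z) := fun x hx => h2 x hx
    rw [← cfc_id ℂ z hn, cfc_congr heq, cfc_const c₁ z hn]
  obtain ⟨c₂, hc₂, hne⟩ := hexists
  set r : ℝ := dist c₁ c₂ / 2 with hr
  have hrpos : 0 < r := by
    have := dist_pos.mpr (Ne.symm hne)
    rw [hr]; linarith
  set f : ℂ → ℂ := fun x => ((max (1 - dist x c₁ / r) 0 : ℝ) : ℂ) with hfdef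
  set g : ℂ → ℂ := fun x => ((max (1 - dist x c₂ / r) 0 : ℝ) : ℂ) with hgdef
  have hfc : Continuous f :=
    Complex.continuous_ofReal.comp
      ((continuous_const.sub ((continuous_id.dist continuous_const).div_const r)).max
        continuous_const)
  have hgc : Continuous g :=
    Complex.continuous_ofReal.comp
      ((continuous_const.sub ((continuous_id.dist continuous_const).div_const r)).max
        continuous_const)
  have hf1 : f c₁ = 1 := by
    simp only [hfdef, dist_self, zero_div, sub_zero]
    norm_num
  have hg1 : g c₂ = 1 := by
    simp only [hgdef, dist_self, zero_div, sub_zero]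
    norm_num
  have hfg : ∀ x : ℂ, f x * g x = 0 := by
    intro x
    rcases le_or_gt r (dist x c₁) with h | h
    · have h0 : (1 : ℝ) - dist x c₁ / r ≤ 0 := by
        rw [sub_nonpos, le_div_iff₀ hrpos]
        linarith
      have : f x = 0 := by
        simp only [hfdef, max_eq_right h0, Complex.ofReal_zero]
      rw [this, zero_mul]
    · have hd2 : r ≤ dist x c₂ := by
        have htri := dist_triangle c₁ x c₂
        have hcomm : dist c₁ x = dist x c₁ := dist_comm _ _
        have h2r : dist c₁ c₂ = 2 * r := by rw [hr]; ring
        linarith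
      have h0 : (1 : ℝ) - dist x c₂ / r ≤ 0 := by
        rw [sub_nonpos, le_div_iff₀ hrpos]
        linarith
      have : g x = 0 := by
        simp only [hgdef, max_eq_right h0, Complex.ofReal_zero]
      rw [this, mul_zero]
  set a : A := cfc f z with ha
  set b : A := cfc g z with hb
  have hab : a * b = 0 := by
    rw [ha, hb, ← cfc_mul f g z hfc.continuousOn hgc.continuousOn]
    calc cfc (fun x => f x * g x) z = cfc (fun _ : ℂ => (0 : ℂ)) z :=
          cfc_congr fun x _ => hfg x
      _ = 0 := by rw [cfc_const 0 z hn, map_zero]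
  have ha0 : a ≠ 0 := by
    intro h
    have hle := norm_apply_le_norm_cfc f z hc₁ hfc.continuousOn hn
    rw [← ha, h, norm_zero, hf1, norm_one] at hle
    linarith
  have hb0 : b ≠ 0 := by
    intro h
    have hle := norm_apply_le_norm_cfc g z hc₂ hgc.continuousOn hn
    rw [← hb, h, norm_zero, hg1, norm_one] at hle
    linarith
  have hacentral : ∀ x : A, a * x = x * a := hcfc_central f
  have hbcentral : ∀ x : A, b * x = x * b := hcfc_central g
  -- the closed two-sided ideal generated by `a`
  set S : Set A := Set.range (fun y : A => a * y) with hS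
  obtain ⟨I, hImem⟩ : ∃ I : TwoSidedIdeal A, ∀ x : A, x ∈ I ↔ x ∈ closure S := by
    refine ⟨TwoSidedIdeal.mk' (closure S) ?_ ?_ ?_ ?_ ?_,
      fun x => TwoSidedIdeal.mem_mk' _ _ _ _ _ _ x⟩
    · exact subset_closure ⟨0, mul_zero a⟩
    · intro x y hx hy
      refine map_mem_closure₂ continuous_add hx hy ?_
      rintro u ⟨y1, rfl⟩ v ⟨y2, rfl⟩
      exact ⟨y1 + y2, show a * (y1 + y2) = a * y1 + a * y2 from mul_add a y1 y2⟩
    · intro x hx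
      refine map_mem_closure continuous_neg hx ?_
      rintro u ⟨y, rfl⟩
      exact ⟨-y, by simp⟩
    · intro x y hy
      refine map_mem_closure (f := fun w => x * w) (continuous_const.mul continuous_id) hy ?_
      rintro u ⟨y0, rfl⟩
      exact ⟨x * y0, show a * (x * y0) = x * (a * y0) by
        rw [← mul_assoc a x y0, hacentral x, mul_assoc]⟩
    · intro x y hx
      refine map_mem_closure (f := fun w => w * y) (continuous_id.mul continuous_const) hx ?_
      rintro u ⟨y0, rfl⟩
      exact ⟨y0 * y, show a * (y0 * y) = (a * y0) * y from (mul_assoc a y0 y).symm⟩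
  have hIset : (I : Set A) = closure S := by
    ext x
    rw [SetLike.mem_coe, hImem]
  rcases hAsimple I (by rw [hIset]; exact isClosed_closure) with hbot | htop
  · have haI : a ∈ I := (hImem a).mpr (subset_closure ⟨1, mul_one a⟩)
    rw [hbot, TwoSidedIdeal.mem_bot] at haI
    exact ha0 haI
  · have h1I : (1 : A) ∈ closure S := (hImem 1).mp (by rw [htop]; exact TwoSidedIdeal.mem_top A)
    have hann : closure S ⊆ {w : A | b * w = 0} := by
      refine closure_minimal ?_ (isClosed_eq (continuous_const.mul continuous_id) continuous_const)
      rintro u ⟨y, rfl⟩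
      show b * (a * y) = 0
      have hba : b * a = 0 := by rw [← hacentral b, hab]
      rw [← mul_assoc, hba, zero_mul]
    have := hann h1I
    rw [Set.mem_setOf_eq, mul_one] at this
    exact hb0 this

private theorem circle_char_classify (χ : ℂ → ℂ)
    (hcont : ContinuousOn χ {μ : ℂ | ‖μ‖ = 1})
    (hone : χ 1 = 1)
    (hmul : ∀ μ ν : ℂ, ‖μ‖ = 1 → ‖ν‖ = 1 → χ (μ * ν) = χ μ * χ ν)
    (hnorm : ∀ μ : ℂ, ‖μ‖ = 1 → ‖χ μ‖ = 1) :
    ∃ n : ℤ, ∀ μ : ℂ, ‖μ‖ = 1 → χ μ = μ ^ n := by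
  haveI : Fact (0 < 2 * Real.pi) := ⟨by positivity⟩
  set T : ℝ := 2 * Real.pi with hT
  set e : ℝ → ℂ := fun θ => Complex.exp (θ * Complex.I) with he
  have he1 : ∀ θ : ℝ, ‖e θ‖ = 1 := fun θ => by
    rw [he]
    simpa using Complex.norm_exp_ofReal_mul_I θ
  have headd : ∀ θ₁ θ₂ : ℝ, e (θ₁ + θ₂) = e θ₁ * e θ₂ := fun θ₁ θ₂ => by
    simp only [he]
    push_cast
    rw [add_mul, Complex.exp_add]
  have heT : e T = 1 := by
    simp only [he, hT]
    push_cast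
    exact Complex.exp_two_pi_mul_I
  set g : ℝ → ℂ := fun θ => χ (e θ) with hg
  have hgper : Function.Periodic g T := by
    intro θ
    simp only [hg]
    rw [headd, heT, mul_one]
  have hecont : Continuous e := Complex.continuous_exp.comp
    (Complex.continuous_ofReal.mul continuous_const)
  have hgcont : Continuous g := hcont.comp_continuous hecont fun θ => he1 θ
  set f : AddCircle T → ℂ := hgper.lift with hf
  have hfcoe : ∀ θ : ℝ, f (θ : AddCircle T) = g θ := fun θ => hgper.lift_coe θ
  have hfcont : Continuous f := by
    rw [hf, (QuotientAddGroup.isQuotientMap_mk _).continuous_iff]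
    exact hgcont
  have hfadd : ∀ x y : AddCircle T, f (x + y) = f x * f y := by
    intro x y
    refine QuotientAddGroup.induction_on x fun θ₁ => ?_
    refine QuotientAddGroup.induction_on y fun θ₂ => ?_
    have h1 : ((θ₁ : AddCircle T) + (θ₂ : AddCircle T)) = ((θ₁ + θ₂ : ℝ) : AddCircle T) := rfl
    rw [h1, hfcoe, hfcoe, hfcoe]
    simp only [hg]
    rw [headd]
    exact hmul _ _ (he1 θ₁) (he1 θ₂)
  have hf0 : f 0 = 1 := by
    have h0 : ((0 : ℝ) : AddCircle T) = 0 := rfl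
    rw [← h0, hfcoe]
    simp only [hg, he]
    push_cast
    rw [zero_mul, Complex.exp_zero, hone]
  have hfnorm : ∀ x : AddCircle T, ‖f x‖ = 1 := by
    intro x
    refine QuotientAddGroup.induction_on x fun θ => ?_
    rw [hfcoe]
    exact hnorm _ (he1 θ)
  -- helper facts about `fourier`
  have fourier_arg_add : ∀ (m : ℤ) (x y : AddCircle T),
      (fourier m (x + y) : ℂ) = fourier m x * fourier m y := by
    intro m x y
    rw [fourier_apply, fourier_apply, fourier_apply, smul_add, AddCircle.toCircle_add]
    push_cast
    ring
  -- some Fourier coefficient is nonzero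
  have hex : ∃ n : ℤ, fourierCoeff f n ≠ 0 := by
    by_contra hall
    push_neg at hall
    set F : C(AddCircle T, ℂ) := ⟨f, hfcont⟩ with hF
    have hp := tsum_sq_fourierCoeff (ContinuousMap.toLp (E := ℂ) 2 AddCircle.haarAddCircle ℂ F)
    simp_rw [fourierCoeff_toLp] at hp
    have hL : ∑' i : ℤ, ‖fourierCoeff (⇑F) i‖ ^ 2 = 0 := by
      have hz : ∀ i : ℤ, ‖fourierCoeff (⇑F) i‖ ^ 2 = (0 : ℝ) := by
        intro i
        rw [show ⇑F = f from rfl, hall i, norm_zero]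
        ring
      rw [tsum_congr hz, tsum_zero]
    have hR : ∫ t, ‖(ContinuousMap.toLp (E := ℂ) 2 AddCircle.haarAddCircle ℂ F :
        Lp ℂ 2 AddCircle.haarAddCircle) t‖ ^ 2 ∂AddCircle.haarAddCircle = 1 := by
      have hae := ContinuousMap.coeFn_toLp (p := 2) (𝕜 := ℂ) AddCircle.haarAddCircle F
      calc ∫ t, ‖(ContinuousMap.toLp (E := ℂ) 2 AddCircle.haarAddCircle ℂ F :
            Lp ℂ 2 AddCircle.haarAddCircle) t‖ ^ 2 ∂AddCircle.haarAddCircle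
          = ∫ t, ‖f t‖ ^ 2 ∂AddCircle.haarAddCircle := by
            refine integral_congr_ae (hae.mono fun t ht => ?_)
            beta_reduce
            rw [ht]
            rfl
        _ = ∫ _t, (1 : ℝ) ∂AddCircle.haarAddCircle := by
            refine integral_congr_ae (Filter.Eventually.of_forall fun t => ?_)
            beta_reduce
            rw [hfnorm t, one_pow]
        _ = 1 := by simp
    rw [hL] at hp
    rw [hR] at hp
    exact one_ne_zero hp.symm
  obtain ⟨n, hcn⟩ := hex
  refine ⟨n, ?_⟩
  have hfour : ∀ u : AddCircle T, f u = fourier n u := by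
    intro u
    have hGinv := integral_add_right_eq_self (μ := AddCircle.haarAddCircle)
      (fun t => (fourier (-n) (t - u) : ℂ) * f t) u
    simp only [add_sub_cancel_right] at hGinv
    have hLHS : ∫ t, (fourier (-n) t : ℂ) * f (t + u) ∂AddCircle.haarAddCircle
        = f u * fourierCoeff f n := by
      calc ∫ t, (fourier (-n) t : ℂ) * f (t + u) ∂AddCircle.haarAddCircle
          = ∫ t, f u * ((fourier (-n) t : ℂ) * f t) ∂AddCircle.haarAddCircle := by
            refine integral_congr_ae (Filter.Eventually.of_forall fun t => ?_)
            beta_reduce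
            rw [hfadd t u]
            ring
        _ = f u * ∫ t, (fourier (-n) t : ℂ) * f t ∂AddCircle.haarAddCircle :=
            integral_const_mul _ _
        _ = f u * fourierCoeff f n := by
            rw [fourierCoeff]
            simp_rw [smul_eq_mul]
    have hsplit : ∀ t : AddCircle T,
        (fourier (-n) (t - u) : ℂ) = (fourier n u : ℂ) * (fourier (-n) t : ℂ) := by
      intro t
      have h1 : (fourier (-n) (t - u) : ℂ) = (fourier (-n) t : ℂ) * (fourier (-n) (-u) : ℂ) := by
        rw [sub_eq_add_neg]
        exact fourier_arg_add (-n) t (-u)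
      have h2 : (fourier (-n) (-u) : ℂ) = (fourier n u : ℂ) := by
        rw [fourier_apply, fourier_apply, smul_neg, neg_smul, neg_neg]
      rw [h1, h2]
      ring
    have hRHS : ∫ t, (fourier (-n) (t - u) : ℂ) * f t ∂AddCircle.haarAddCircle
        = (fourier n u : ℂ) * fourierCoeff f n := by
      calc ∫ t, (fourier (-n) (t - u) : ℂ) * f t ∂AddCircle.haarAddCircle
          = ∫ t, (fourier n u : ℂ) * ((fourier (-n) t : ℂ) * f t) ∂AddCircle.haarAddCircle := by
            refine integral_congr_ae (Filter.Eventually.of_forall fun t => ?_)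
            beta_reduce
            rw [hsplit t]
            ring
        _ = (fourier n u : ℂ) * ∫ t, (fourier (-n) t : ℂ) * f t ∂AddCircle.haarAddCircle :=
            integral_const_mul _ _
        _ = (fourier n u : ℂ) * fourierCoeff f n := by
            rw [fourierCoeff]
            simp_rw [smul_eq_mul]
    rw [hLHS, hRHS] at hGinv
    exact mul_right_cancel₀ hcn hGinv
  intro μ hμ
  obtain ⟨θ, hθ⟩ := (Complex.norm_eq_one_iff μ).mp hμ
  have h4 : (fourier n (θ : AddCircle T) : ℂ) = μ ^ n := by
    rw [fourier_coe_apply]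
    have hpi : (Real.pi : ℂ) ≠ 0 := by exact_mod_cast Real.pi_ne_zero
    have harg : 2 * (Real.pi : ℂ) * Complex.I * (n : ℂ) * (θ : ℂ) / ((T : ℝ) : ℂ)
        = (n : ℂ) * ((θ : ℂ) * Complex.I) := by
      rw [hT]
      push_cast
      field_simp
    rw [harg, Complex.exp_int_mul, hθ]
  calc χ μ = g θ := by rw [show g θ = χ (Complex.exp ((θ : ℂ) * Complex.I)) from rfl, hθ]
    _ = f (θ : AddCircle T) := (hfcoe θ).symm
    _ = fourier n (θ : AddCircle T) := hfour _
    _ = μ ^ n := h4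

/-- Let `A` be a unital simple C*-algebra, `ρ` a continuous action of the
circle group on `A` with fixed-point algebra `Bf`, and `s ∈ A` an isometry
with `s s* ≠ 1` and `ρ μ s = μ s` for every `μ` of modulus one. Assume every
`c ∈ Bf` with `c* c = 1` or `c c* = 1` is a unitary. Let `β` be an
automorphism of `A` commuting with the action. If `β = Ad v` is inner then
`v ∈ Bf`; consequently `β` maps `Bf` onto `Bf`, and if the restriction of `β`
to `Bf` is not implemented by a unitary of `Bf`, then `β` is outer. -/
theorem inner_implementing_unitary_mem_fixedPointAlgebra
    {A : Type*} [NormedRing A] [StarRing A] [CStarRing A] [CompleteSpace A]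
    [NormedAlgebra ℂ A] [StarModule ℂ A]
    -- A is simple
    (hAsimple : ∀ I : TwoSidedIdeal A, IsClosed (I : Set A) → I = ⊥ ∨ I = ⊤)
    -- ρ is a continuous action of the circle group 𝕋 on A by *-automorphisms
    (ρ : ℂ → A ≃ₐ[ℂ] A)
    (hρstar : ∀ μ : ℂ, ‖μ‖ = 1 → ∀ x : A, ρ μ (star x) = star (ρ μ x))
    (hρmul : ∀ μ ν : ℂ, ‖μ‖ = 1 → ‖ν‖ = 1 → ∀ x : A, ρ (μ * ν) x = ρ μ (ρ ν x))
    (hρone : ∀ x : A, ρ 1 x = x)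
    (hρcont : ∀ x : A, ContinuousOn (fun μ : ℂ => ρ μ x) {μ : ℂ | ‖μ‖ = 1})
    -- Bf is the fixed-point algebra of the action
    (Bf : Set A) (hBf : Bf = {b : A | ∀ μ : ℂ, ‖μ‖ = 1 → ρ μ b = b})
    -- s is an isometry with s s* ≠ 1 on which the action is by scalars
    (s : A) (hs : star s * s = 1) (hss : s * star s ≠ 1)
    (hρs : ∀ μ : ℂ, ‖μ‖ = 1 → ρ μ s = μ • s)
    -- Bf has no proper isometry and no proper coisometry
    (hBiso : ∀ c ∈ Bf, (star c * c = 1 ∨ c * star c = 1) →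
      star c * c = 1 ∧ c * star c = 1)
    -- β is an automorphism of A commuting with the action
    (β : A ≃ₐ[ℂ] A) (hβstar : ∀ x : A, β (star x) = star (β x))
    (hβcomm : ∀ μ : ℂ, ‖μ‖ = 1 → ∀ x : A, β (ρ μ x) = ρ μ (β x))
    :
    (∀ v ∈ unitary A, (∀ x : A, β x = v * x * star v) → v ∈ Bf) ∧
    (⇑β '' Bf = Bf) ∧
    ((¬ ∃ w : A, w ∈ Bf ∧ w ∈ unitary A ∧ ∀ b ∈ Bf, β b = w * b * star w) →
      ¬ ∃ v ∈ unitary A, ∀ x : A, β x = v * x * star v) := by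
  letI : CStarAlgebra A := { }
  haveI : Nontrivial A := ⟨⟨s * star s, 1, hss⟩⟩
  obtain ⟨φ, hφnorm, hφ1⟩ := exists_dual_vector ℂ (1 : A) (norm_ne_zero_iff.mpr one_ne_zero)
  have hφone : φ 1 = 1 := by rw [hφ1, CStarRing.norm_one]; simp
  have hφsmul : ∀ c : ℂ, φ (c • (1 : A)) = c := fun c => by
    rw [ContinuousLinearMap.map_smul, smul_eq_mul, hφone, mul_one]
  have hρsmul : ∀ (μ : ℂ) (c : ℂ) (x : A), ρ μ (c • x) = c • ρ μ x := fun μ c x => by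
    rw [Algebra.smul_def, map_mul, AlgEquiv.commutes, ← Algebra.smul_def]
  -- Part 1
  have part1 : ∀ v ∈ unitary A, (∀ x : A, β x = v * x * star v) → v ∈ Bf := by
    intro v hv hβv
    have hvv : star v * v = 1 := Unitary.star_mul_self_of_mem hv
    have hvv' : v * star v = 1 := Unitary.mul_star_self_of_mem hv
    set w : ℂ → A := fun μ => star v * ρ μ v with hw
    have hρv_unit : ∀ μ : ℂ, ‖μ‖ = 1 →
        star (ρ μ v) * ρ μ v = 1 ∧ ρ μ v * star (ρ μ v) = 1 := by
      intro μ hμ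
      constructor
      · rw [← hρstar μ hμ, ← map_mul, hvv, map_one]
      · rw [← hρstar μ hμ, ← map_mul, hvv', map_one]
    have hcentral : ∀ μ : ℂ, ‖μ‖ = 1 → ∀ x : A, w μ * x = x * w μ := by
      intro μ hμ x
      obtain ⟨y, rfl⟩ := (ρ μ).surjective x
      have hkey : ρ μ v * ρ μ y * star (ρ μ v) = v * ρ μ y * star v := by
        have h1 := hβcomm μ hμ y
        rw [hβv y, hβv (ρ μ y), map_mul, map_mul, hρstar μ hμ] at h1
        exact h1.symm
      have h2 : star v * (ρ μ v * ρ μ y * star (ρ μ v)) * ρ μ v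
          = star v * (v * ρ μ y * star v) * ρ μ v := by rw [hkey]
      have hL : star v * (ρ μ v * ρ μ y * star (ρ μ v)) * ρ μ v
          = (star v * ρ μ v) * ρ μ y := by
        calc star v * (ρ μ v * ρ μ y * star (ρ μ v)) * ρ μ v
            = (star v * ρ μ v) * ρ μ y * (star (ρ μ v) * ρ μ v) := by noncomm_ring
          _ = (star v * ρ μ v) * ρ μ y := by rw [(hρv_unit μ hμ).1, mul_one]
      have hR : star v * (v * ρ μ y * star v) * ρ μ v
          = ρ μ y * (star v * ρ μ v) := by
        calc star v * (v * ρ μ y * star v) * ρ μ v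
            = (star v * v) * (ρ μ y * (star v * ρ μ v)) := by noncomm_ring
          _ = ρ μ y * (star v * ρ μ v) := by rw [hvv, one_mul]
      show (star v * ρ μ v) * ρ μ y = ρ μ y * (star v * ρ μ v)
      rw [← hL, h2, hR]
    have hwu : ∀ μ : ℂ, ‖μ‖ = 1 → star (w μ) * w μ = 1 ∧ w μ * star (w μ) = 1 := by
      intro μ hμ
      constructor
      · show star (star v * ρ μ v) * (star v * ρ μ v) = 1
        rw [star_mul, star_star]
        calc star (ρ μ v) * v * (star v * ρ μ v)
            = star (ρ μ v) * (v * star v) * ρ μ v := by noncomm_ring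
          _ = 1 := by rw [hvv', mul_one, (hρv_unit μ hμ).1]
      · show (star v * ρ μ v) * star (star v * ρ μ v) = 1
        rw [star_mul, star_star]
        calc (star v * ρ μ v) * (star (ρ μ v) * v)
            = star v * (ρ μ v * star (ρ μ v)) * v := by noncomm_ring
          _ = 1 := by rw [(hρv_unit μ hμ).2, mul_one, hvv]
    have hwnormal : ∀ μ : ℂ, ‖μ‖ = 1 → IsStarNormal (w μ) := by
      intro μ hμ
      exact ⟨((hwu μ hμ).1).trans ((hwu μ hμ).2).symm⟩
    set χ : ℂ → ℂ := fun μ => φ (w μ) with hχ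
    have hwscalar : ∀ μ : ℂ, ‖μ‖ = 1 → w μ = χ μ • (1 : A) := by
      intro μ hμ
      obtain ⟨c, hcw⟩ := central_scalar hAsimple (w μ) (hwnormal μ hμ) (hcentral μ hμ)
      have hχc : χ μ = c := by
        show φ (w μ) = c
        rw [hcw, Algebra.algebraMap_eq_smul_one, hφsmul]
      rw [hcw, hχc, Algebra.algebraMap_eq_smul_one]
    have hρveq : ∀ μ : ℂ, ‖μ‖ = 1 → ρ μ v = χ μ • v := by
      intro μ hμ
      have hvw : v * w μ = ρ μ v := by
        show v * (star v * ρ μ v) = ρ μ v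
        rw [← mul_assoc, hvv', one_mul]
      rw [← hvw, hwscalar μ hμ, mul_smul_comm, mul_one]
    have hχone : χ 1 = 1 := by
      show φ (star v * ρ 1 v) = 1
      rw [hρone v, hvv, hφone]
    have hχnorm : ∀ μ : ℂ, ‖μ‖ = 1 → ‖χ μ‖ = 1 := by
      intro μ hμ
      have h1 := (hwu μ hμ).1
      rw [hwscalar μ hμ, star_smul, star_one, smul_mul_smul_comm, one_mul] at h1
      have h2 : star (χ μ) * χ μ = 1 := by
        have := hφsmul (star (χ μ) * χ μ)
        rw [h1] at this
        rw [← this, hφone]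
      have h4 : χ μ * star (χ μ) = 1 := by rw [mul_comm]; exact h2
      rw [Complex.star_def, Complex.mul_conj] at h4
      have h5 : Complex.normSq (χ μ) = 1 := by exact_mod_cast h4
      have h3 : ‖χ μ‖ ^ 2 = 1 := by
        rw [← Complex.normSq_eq_norm_sq, h5]
      have h6 : (‖χ μ‖ - 1) * (‖χ μ‖ + 1) = 0 := by linear_combination h3
      rcases mul_eq_zero.mp h6 with h7 | h7
      · linarith
      · have := norm_nonneg (χ μ)
        linarith
    have hχmul : ∀ μ ν : ℂ, ‖μ‖ = 1 → ‖ν‖ = 1 → χ (μ * ν) = χ μ * χ ν := by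
      intro μ ν hμ hν
      have hwmul : w (μ * ν) = (χ μ * χ ν) • (1 : A) := by
        show star v * ρ (μ * ν) v = (χ μ * χ ν) • (1 : A)
        rw [hρmul μ ν hμ hν v, hρveq ν hν, hρsmul, hρveq μ hμ, smul_smul, mul_smul_comm, hvv,
          mul_comm (χ ν) (χ μ)]
      show φ (w (μ * ν)) = χ μ * χ ν
      rw [hwmul, hφsmul]
    have hχcont : ContinuousOn χ {μ : ℂ | ‖μ‖ = 1} := by
      have hwcont : ContinuousOn (fun μ : ℂ => star v * ρ μ v) {μ : ℂ | ‖μ‖ = 1} :=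
        continuousOn_const.mul (hρcont v)
      exact φ.continuous.comp_continuousOn hwcont
    obtain ⟨n, hn⟩ := circle_char_classify χ hχcont hχone hχmul hχnorm
    rw [hBf]
    rcases lt_trichotomy n 0 with hneg | hzero | hpos
    · -- n < 0 : contradiction via the isometry `v * s ^ m` in `Bf`
      exfalso
      set m : ℕ := n.natAbs with hm
      have hmn : (m : ℤ) = -n := by omega
      have hm1 : 1 ≤ m := by omega
      set c : A := v * s ^ m with hcdef
      have hcBf : c ∈ Bf := by
        rw [hBf]
        intro μ hμ
        have hμ0 : μ ≠ 0 := fun h => by rw [h, norm_zero] at hμ; exact zero_ne_one hμ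
        rw [hcdef, map_mul, map_pow, hρs μ hμ, hρveq μ hμ, hn μ hμ, smul_pow,
          smul_mul_smul_comm]
        rw [← zpow_natCast μ m, ← zpow_add₀ hμ0, hmn, add_neg_cancel, zpow_zero, one_smul]
      have hcc : star c * c = 1 := by
        rw [hcdef, star_mul]
        calc star (s ^ m) * star v * (v * s ^ m)
            = star (s ^ m) * (star v * v) * s ^ m := by noncomm_ring
          _ = 1 := by rw [hvv, mul_one, star_pow, isom_pow hs m]
      obtain ⟨-, hcoiso⟩ := hBiso c hcBf (Or.inl hcc)
      have hkey : s ^ m * (star s) ^ m = 1 := by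
        have h5 : star v * (c * star c) * v = 1 := by rw [hcoiso, mul_one, hvv]
        rw [hcdef, star_mul] at h5
        have h6 : star v * (v * s ^ m * (star (s ^ m) * star v)) * v
            = (star v * v) * (s ^ m * star (s ^ m)) * (star v * v) := by noncomm_ring
        rw [h6, hvv, one_mul, mul_one, star_pow] at h5
        exact h5
      obtain ⟨k, hk⟩ : ∃ k, m = k + 1 := ⟨m - 1, by omega⟩
      rw [hk] at hkey
      exact coisom_pow_false hs hss k hkey
    · -- n = 0 : v is fixed by the action
      intro μ hμ
      rw [hρveq μ hμ, hn μ hμ, hzero, zpow_zero, one_smul]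
    · -- n > 0 : contradiction via the coisometry `v * (star s) ^ m` in `Bf`
      exfalso
      set m : ℕ := n.natAbs with hm
      have hmn : (m : ℤ) = n := by omega
      have hm1 : 1 ≤ m := by omega
      set c : A := v * (star s) ^ m with hcdef
      have hμstar : ∀ μ : ℂ, ‖μ‖ = 1 → μ * star μ = 1 := by
        intro μ hμ
        rw [Complex.star_def, Complex.mul_conj]
        have h8 : ‖μ‖ ^ 2 = 1 := by rw [hμ]; norm_num
        rw [← Complex.normSq_eq_norm_sq] at h8
        exact_mod_cast h8
      have hcBf : c ∈ Bf := by
        rw [hBf]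
        intro μ hμ
        rw [hcdef, map_mul, map_pow, hρstar μ hμ, hρs μ hμ, star_smul, hρveq μ hμ, hn μ hμ,
          smul_pow, smul_mul_smul_comm]
        have hcoef : μ ^ n * (star μ) ^ m = 1 := by
          rw [← hmn, zpow_natCast, ← mul_pow, hμstar μ hμ, one_pow]
        rw [hcoef, one_smul]
      have hco : c * star c = 1 := by
        rw [hcdef, star_mul, star_pow, star_star]
        calc v * (star s) ^ m * (s ^ m * star v)
            = v * ((star s) ^ m * s ^ m) * star v := by noncomm_ring
          _ = 1 := by rw [isom_pow hs m, mul_one, hvv']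
      obtain ⟨hiso, -⟩ := hBiso c hcBf (Or.inr hco)
      have hkey : s ^ m * (star s) ^ m = 1 := by
        have h6 : s ^ m * (star s) ^ m = s ^ m * (star v * v) * (star s) ^ m := by
          rw [hvv, mul_one]
        rw [h6]
        calc s ^ m * (star v * v) * (star s) ^ m
            = (s ^ m * star v) * (v * (star s) ^ m) := by noncomm_ring
          _ = star c * c := by rw [hcdef, star_mul, star_pow, star_star]
          _ = 1 := hiso
      obtain ⟨k, hk⟩ : ∃ k, m = k + 1 := ⟨m - 1, by omega⟩
      rw [hk] at hkey
      exact coisom_pow_false hs hss k hkey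
  -- Part 2
  have part2 : ⇑β '' Bf = Bf := by
    ext b
    constructor
    · rintro ⟨x, hx, rfl⟩
      rw [hBf] at hx ⊢
      intro μ hμ
      rw [← hβcomm μ hμ x, hx μ hμ]
    · intro hb
      refine ⟨β.symm b, ?_, β.apply_symm_apply b⟩
      rw [hBf] at hb ⊢
      intro μ hμ
      apply β.injective
      rw [hβcomm μ hμ (β.symm b), β.apply_symm_apply, hb μ hμ]
  refine ⟨part1, part2, ?_⟩
  rintro hno ⟨v, hv, hβv⟩
  exact hno ⟨v, part1 v hv hβv, hv, fun b _ => hβv b⟩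
end

section
/- Let A be a C*-algebra, N ≥ 1, and (E_{i,j})_{0≤i,j≤N−1} a system of matrix units in A. Let φ : A → A be a *-homomorphism satisfying φ(E_{i,j}) = E_{i+1,j+1} for all 0 ≤ i, j ≤ N−2. Then E_0 := N^{−1} Σ_{i,j=0}^{N−1} E_{i,j} is a projection in A and ‖φ(E_0) − E_0‖ ≤ 4/√N. -/
open Finset

/-- A diagonal matrix unit has norm at most 1 (it is a projection). -/
lemma matrix_unit_diag_norm_le_one {A : Type*} [NormedRing A] [StarRing A] [CStarRing A]
    (N : ℕ) (E : ℕ → ℕ → A)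
    (hEstar : ∀ i j, i < N → j < N → star (E i j) = E j i)
    (hEmul : ∀ i j k l, i < N → j < N → k < N → l < N →
      E i j * E k l = if j = k then E i l else 0)
    (k : ℕ) (hk : k < N) : ‖E k k‖ ≤ 1 := by
  have h1 := CStarRing.norm_star_mul_self (x := E k k)
  rw [hEstar _ _ hk hk, hEmul _ _ _ _ hk hk hk hk, if_pos rfl] at h1
  nlinarith [norm_nonneg (E k k)]

/-- Norm bound for a sum of distinct matrix units lying in a single column. -/
lemma matrix_units_col_norm_le {A : Type*} [NormedRing A] [StarRing A] [CStarRing A]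
    (N : ℕ) (E : ℕ → ℕ → A)
    (hEstar : ∀ i j, i < N → j < N → star (E i j) = E j i)
    (hEmul : ∀ i j k l, i < N → j < N → k < N → l < N →
      E i j * E k l = if j = k then E i l else 0)
    (k : ℕ) (hk : k < N) (m : ℕ) (f : ℕ → ℕ)
    (hf : ∀ i < m, f i < N)
    (hinj : ∀ i < m, ∀ j < m, f i = f j → i = j) :
    ‖∑ i ∈ range m, E (f i) k‖ ≤ Real.sqrt m := by
  set T := ∑ i ∈ range m, E (f i) k with hT
  have hTT : star T * T = m • E k k := by
    rw [hT, star_sum, Finset.sum_mul]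
    have key : ∀ i ∈ range m,
        star (E (f i) k) * ∑ j ∈ range m, E (f j) k = E k k := by
      intro i hi
      rw [mem_range] at hi
      rw [hEstar _ _ (hf i hi) hk, Finset.mul_sum]
      rw [Finset.sum_eq_single i]
      · rw [hEmul _ _ _ _ hk (hf i hi) (hf i hi) hk, if_pos rfl]
      · intro j hj hji
        rw [mem_range] at hj
        rw [hEmul _ _ _ _ hk (hf i hi) (hf j hj) hk, if_neg]
        exact fun h => hji (hinj j hj i hi h.symm)
      · intro h; exact absurd (mem_range.mpr hi) h
    rw [Finset.sum_congr rfl key, Finset.sum_const, card_range]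
  have hsq : ‖T‖ * ‖T‖ ≤ (m : ℝ) := by
    rw [← CStarRing.norm_star_mul_self, hTT]
    calc ‖m • E k k‖ ≤ m * ‖E k k‖ := norm_nsmul_le
    _ ≤ (m : ℝ) * 1 := by
        have := matrix_unit_diag_norm_le_one N E hEstar hEmul k hk
        exact mul_le_mul_of_nonneg_left this (Nat.cast_nonneg m)
    _ = (m : ℝ) := mul_one _
  rw [Real.le_sqrt (norm_nonneg T) (Nat.cast_nonneg m), sq]
  exact hsq

/-- Let `(E i j)_{0 ≤ i,j ≤ N-1}` be a system of matrix units in a C*-algebra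
`A` and `φ : A → A` a *-homomorphism with `φ (E i j) = E (i+1) (j+1)` for
`0 ≤ i, j ≤ N-2`. Then `E₀ := N⁻¹ ∑_{i,j} E i j` is a projection and
`‖φ E₀ - E₀‖ ≤ 4 / √N`. -/
theorem averaged_matrix_units_almost_invariant
    {A : Type*} [NormedRing A] [StarRing A] [CStarRing A] [CompleteSpace A]
    [NormedAlgebra ℂ A] [StarModule ℂ A]
    (N : ℕ) (hN : 1 ≤ N)
    -- (E i j) is a system of matrix units of size N
    (E : ℕ → ℕ → A)
    (hEstar : ∀ i j, i < N → j < N → star (E i j) = E j i)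
    (hEmul : ∀ i j k l, i < N → j < N → k < N → l < N →
      E i j * E k l = if j = k then E i l else 0)
    -- φ is a *-homomorphism shifting the matrix units
    (φ : A →⋆ₙₐ[ℂ] A)
    (hφ : ∀ i j, i + 1 < N → j + 1 < N → φ (E i j) = E (i + 1) (j + 1))
    :
    ∀ E₀ : A,
      E₀ = (N : ℂ)⁻¹ • ∑ i ∈ Finset.range N, ∑ j ∈ Finset.range N, E i j →
      IsSelfAdjoint E₀ ∧ E₀ * E₀ = E₀ ∧ ‖φ E₀ - E₀‖ ≤ 4 / Real.sqrt N := by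
  intro E₀ hE₀
  letI : CStarAlgebra A := ⟨⟩
  obtain ⟨M, rfl⟩ : ∃ M, N = M + 1 := ⟨N - 1, (Nat.succ_pred_eq_of_pos hN).symm⟩
  set S : A := ∑ i ∈ Finset.range (M + 1), ∑ j ∈ Finset.range (M + 1), E i j with hS
  have hNC : ((M + 1 : ℕ) : ℂ) ≠ 0 := Nat.cast_ne_zero.mpr (Nat.succ_ne_zero M)
  -- self-adjointness
  have hsa : IsSelfAdjoint E₀ := by
    rw [hE₀]
    unfold IsSelfAdjoint
    rw [star_smul, star_inv₀, star_natCast, star_sum]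
    congr 1
    simp_rw [star_sum]
    rw [Finset.sum_comm]
    refine Finset.sum_congr rfl fun j hj => Finset.sum_congr rfl fun i hi => ?_
    rw [mem_range] at hi hj
    exact hEstar i j hi hj
  refine ⟨hsa, ?_, ?_⟩
  -- idempotency
  · have hEjS : ∀ i ∈ range (M + 1), ∀ j ∈ range (M + 1),
        E i j * S = ∑ l ∈ range (M + 1), E i l := by
      intro i hi j hj
      rw [mem_range] at hi hj
      rw [hS, Finset.mul_sum, Finset.sum_eq_single j]
      · rw [Finset.mul_sum]
        refine Finset.sum_congr rfl fun l hl => ?_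
        rw [mem_range] at hl
        rw [hEmul _ _ _ _ hi hj hj hl, if_pos rfl]
      · intro k hk hkj
        rw [mem_range] at hk
        rw [Finset.mul_sum]
        refine Finset.sum_eq_zero fun l hl => ?_
        rw [mem_range] at hl
        rw [hEmul _ _ _ _ hi hj hk hl, if_neg (Ne.symm hkj)]
      · intro h; exact absurd (mem_range.mpr hj) h
    have hSS : S * S = ((M + 1 : ℕ) : ℂ) • S := by
      conv_lhs => rw [hS, Finset.sum_mul]
      have : ∀ i ∈ range (M + 1),
          (∑ j ∈ range (M + 1), E i j) * S
            = ((M + 1 : ℕ) : ℂ) • ∑ l ∈ range (M + 1), E i l := by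
        intro i hi
        rw [Finset.sum_mul, Finset.sum_congr rfl (hEjS i hi), Finset.sum_const,
          card_range, Nat.cast_smul_eq_nsmul]
      rw [Finset.sum_congr rfl this, ← Finset.smul_sum]
    rw [hE₀, smul_mul_smul_comm, hSS, smul_smul]
    congr 1
    field_simp
  -- the norm estimate
  · have hcontr : ∀ a : A, ‖φ a‖ ≤ ‖a‖ := fun a =>
      NonUnitalStarAlgHom.norm_apply_le φ a
    -- boundary pieces
    set C1 : A := ∑ i ∈ range M, E i M with hC1
    set R1 : A := ∑ j ∈ range (M + 1), E M j with hR1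
    set C0 : A := ∑ i ∈ range M, E (i + 1) 0 with hC0
    set R0 : A := ∑ j ∈ range (M + 1), E 0 j with hR0
    have hdiff : φ S - S = φ C1 + φ R1 - (C0 + R0) := by
      have hφS : φ S = (∑ i ∈ range M, ∑ j ∈ range M, E (i + 1) (j + 1))
          + (φ C1 + φ R1) := by
        rw [hS, map_sum, Finset.sum_range_succ]
        have hrow : ∀ i ∈ range M,
            φ (∑ j ∈ range (M + 1), E i j)
              = (∑ j ∈ range M, E (i + 1) (j + 1)) + φ (E i M) := by
          intro i hi
          rw [mem_range] at hi
          rw [map_sum, Finset.sum_range_succ]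
          congr 1
          refine Finset.sum_congr rfl fun j hj => ?_
          rw [mem_range] at hj
          exact hφ i j (Nat.succ_lt_succ hi) (Nat.succ_lt_succ hj)
        rw [Finset.sum_congr rfl hrow, Finset.sum_add_distrib, hC1, hR1, map_sum]
        rw [map_sum φ (fun i => E i M) (range M), add_assoc]
      have hSsplit : S = (∑ i ∈ range M, ∑ j ∈ range M, E (i + 1) (j + 1))
          + (C0 + R0) := by
        rw [hS, Finset.sum_range_succ']
        have hrow : ∀ i ∈ range M,
            (∑ j ∈ range (M + 1), E (i + 1) j)
              = (∑ j ∈ range M, E (i + 1) (j + 1)) + E (i + 1) 0 := by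
          intro i _
          rw [Finset.sum_range_succ']
        rw [Finset.sum_congr rfl hrow, Finset.sum_add_distrib, hC0, hR0]
        first | rfl | abel
      rw [hφS]
      conv_lhs => rw [hSsplit]
      abel
    -- norms of the boundary pieces
    have hC1n : ‖C1‖ ≤ Real.sqrt M := by
      rw [hC1]
      exact matrix_units_col_norm_le (M + 1) E hEstar hEmul M (Nat.lt_succ_self M)
        M id (fun i hi => hi.trans (Nat.lt_succ_self M)) (fun i _ j _ h => h)
    have hC0n : ‖C0‖ ≤ Real.sqrt M := by
      rw [hC0]
      exact matrix_units_col_norm_le (M + 1) E hEstar hEmul 0 (Nat.succ_pos M)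
        M (· + 1) (fun i hi => Nat.succ_lt_succ hi)
        (fun i _ j _ h => Nat.succ_injective h)
    have hR1n : ‖R1‖ ≤ Real.sqrt (M + 1) := by
      have : R1 = star (∑ j ∈ range (M + 1), E j M) := by
        rw [star_sum, hR1]
        refine Finset.sum_congr rfl fun j hj => ?_
        rw [mem_range] at hj
        rw [hEstar _ _ hj (Nat.lt_succ_self M)]
      rw [this, norm_star]
      have := matrix_units_col_norm_le (M + 1) E hEstar hEmul M (Nat.lt_succ_self M)
        (M + 1) id (fun i hi => hi) (fun i _ j _ h => h)
      simpa using this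
    have hR0n : ‖R0‖ ≤ Real.sqrt (M + 1) := by
      have : R0 = star (∑ j ∈ range (M + 1), E j 0) := by
        rw [star_sum, hR0]
        refine Finset.sum_congr rfl fun j hj => ?_
        rw [mem_range] at hj
        rw [hEstar _ _ hj (Nat.succ_pos M)]
      rw [this, norm_star]
      have := matrix_units_col_norm_le (M + 1) E hEstar hEmul 0 (Nat.succ_pos M)
        (M + 1) id (fun i hi => hi) (fun i _ j _ h => h)
      simpa using this
    have hsum : ‖φ S - S‖ ≤ 2 * Real.sqrt M + 2 * Real.sqrt (M + 1) := by
      rw [hdiff]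
      calc ‖φ C1 + φ R1 - (C0 + R0)‖
          ≤ ‖φ C1 + φ R1‖ + ‖C0 + R0‖ := norm_sub_le _ _
        _ ≤ (‖φ C1‖ + ‖φ R1‖) + (‖C0‖ + ‖R0‖) :=
            add_le_add (norm_add_le _ _) (norm_add_le _ _)
        _ ≤ (‖C1‖ + ‖R1‖) + (‖C0‖ + ‖R0‖) :=
            add_le_add (add_le_add (hcontr C1) (hcontr R1)) le_rfl
        _ ≤ 2 * Real.sqrt M + 2 * Real.sqrt (M + 1) := by
            push_cast at hC1n hC0n hR1n hR0n ⊢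
            linarith
    -- put it together
    have hφE₀ : φ E₀ - E₀ = ((M + 1 : ℕ) : ℂ)⁻¹ • (φ S - S) := by
      rw [hE₀, map_smul, smul_sub]
    have hnc : ‖((M + 1 : ℕ) : ℂ)⁻¹‖ = ((M : ℝ) + 1)⁻¹ := by
      rw [norm_inv, Complex.norm_natCast]; push_cast; ring
    rw [hφE₀, norm_smul, hnc]
    have hcastg : ((M + 1 : ℕ) : ℝ) = (M : ℝ) + 1 := by push_cast; ring
    rw [show ((M + 1 : ℕ) : ℝ) = (M : ℝ) + 1 from hcastg]
    set s := Real.sqrt ((M : ℝ) + 1) with hs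
    have hMpos : (0 : ℝ) < (M : ℝ) + 1 := by positivity
    have hspos : (0 : ℝ) < s := Real.sqrt_pos.mpr hMpos
    have hmul : s * s = (M : ℝ) + 1 := Real.mul_self_sqrt hMpos.le
    have hsqM : Real.sqrt (M : ℝ) ≤ s := Real.sqrt_le_sqrt (by linarith)
    have hsum4 : ‖φ S - S‖ ≤ 4 * s := by
      have : (2 : ℝ) * Real.sqrt M + 2 * Real.sqrt ((M : ℝ) + 1) ≤ 4 * s := by
        rw [← hs]; linarith
      calc ‖φ S - S‖ ≤ 2 * Real.sqrt M + 2 * Real.sqrt ((M : ℝ) + 1) := by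
            convert hsum using 3 <;> push_cast <;> ring
        _ ≤ 4 * s := this
    calc ((M : ℝ) + 1)⁻¹ * ‖φ S - S‖
        ≤ ((M : ℝ) + 1)⁻¹ * (4 * s) := by
          exact mul_le_mul_of_nonneg_left hsum4 (by positivity)
      _ = 4 * s / ((M : ℝ) + 1) := by ring
      _ = 4 / s := by
          rw [div_eq_div_iff hMpos.ne' hspos.ne', mul_assoc, hmul]
end

section
/- Let A be a C*-algebra, m, M ≥ 1 integers, (f_{i,j})_{0≤i,j≤mM−1} a system of matrix units in A, and β : A → A a *-homomorphism satisfying β(f_{i,j}) = f_{i+1,j+1} for all 0 ≤ i, j ≤ mM−2. For 0 ≤ i ≤ M−1 define F_i = m^{−1} Σ_{k,l=0}^{m−1} f_{i+kM, i+lM}. Then F_0,…,F_{M−1} are mutually orthogonal projections in A, β(F_i) = F_{i+1} for 0 ≤ i ≤ M−2, and ‖β(F_{M−1}) − F_0‖ ≤ 4/√m. -/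
private lemma aux_idx_lt {i k m M : ℕ} (hi : i < M) (hk : k < m) : i + k * M < m * M :=
  calc i + k * M < M + k * M := by omega
  _ = (k + 1) * M := by ring
  _ ≤ m * M := Nat.mul_le_mul_right M hk

private lemma aux_idx_eq {M i j : ℕ} (k l : ℕ) (hi : i < M) (hj : j < M) :
    i + k * M = j + l * M ↔ i = j ∧ k = l := by
  constructor
  · intro h
    have h1 : (i + k * M) % M = (j + l * M) % M := by rw [h]
    rw [Nat.add_mul_mod_self_right, Nat.add_mul_mod_self_right,
      Nat.mod_eq_of_lt hi, Nat.mod_eq_of_lt hj] at h1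
    subst h1
    have h2 : k * M = l * M := by omega
    exact ⟨rfl, Nat.eq_of_mul_eq_mul_right (by omega) h2⟩
  · rintro ⟨rfl, rfl⟩; rfl

private lemma aux_row_norm {A : Type*} [NormedRing A] [StarRing A] [CStarRing A]
    (N : ℕ) (f : ℕ → ℕ → A)
    (hfstar : ∀ i j, i < N → j < N → star (f i j) = f j i)
    (hfmul : ∀ i j k l, i < N → j < N → k < N → l < N →
      f i j * f k l = if j = k then f i l else 0)
    (n : ℕ) (a : ℕ → ℕ) (ha : ∀ k, k < n → a k < N)
    (hinj : ∀ k l, k < n → l < n → a k = a l → k = l)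
    (j : ℕ) (hj : j < N) :
    ‖∑ k ∈ Finset.range n, f (a k) j‖ ≤ Real.sqrt n := by
  have hfjj : ‖f j j‖ ≤ 1 := by
    have h1 : f j j * f j j = f j j := by simpa using hfmul j j j j hj hj hj hj
    have h2 : ‖f j j‖ * ‖f j j‖ = ‖f j j‖ := by
      conv_lhs => rw [← CStarRing.norm_star_mul_self (x := f j j)]
      rw [hfstar j j hj hj, h1]
    nlinarith [norm_nonneg (f j j)]
  set x := ∑ k ∈ Finset.range n, f (a k) j with hxdef
  have hxx : star x * x = n • f j j := by
    rw [hxdef, star_sum, Finset.sum_mul_sum]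
    calc ∑ k' ∈ Finset.range n, ∑ k ∈ Finset.range n, star (f (a k') j) * f (a k) j
        = ∑ k' ∈ Finset.range n, ∑ k ∈ Finset.range n,
            (if a k' = a k then f j j else 0) := by
          refine Finset.sum_congr rfl fun k' hk' => Finset.sum_congr rfl fun k hk => ?_
          rw [hfstar _ _ (ha k' (Finset.mem_range.mp hk')) hj]
          exact hfmul j (a k') (a k) j hj (ha k' (Finset.mem_range.mp hk'))
            (ha k (Finset.mem_range.mp hk)) hj
      _ = ∑ k' ∈ Finset.range n, f j j := by
          refine Finset.sum_congr rfl fun k' hk' => ?_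
          rw [Finset.sum_eq_single_of_mem k' hk']
          · exact if_pos rfl
          · intro k hk hne
            exact if_neg fun h => hne (hinj k k' (Finset.mem_range.mp hk)
              (Finset.mem_range.mp hk') h.symm)
      _ = n • f j j := by rw [Finset.sum_const, Finset.card_range]
  have hnn : ‖x‖ * ‖x‖ ≤ n := by
    rw [← CStarRing.norm_star_mul_self, hxx]
    calc ‖n • f j j‖ ≤ n * ‖f j j‖ := norm_nsmul_le
      _ ≤ n * 1 := by gcongr
      _ = n := mul_one _
  rw [show ‖x‖ * ‖x‖ = ‖x‖ ^ 2 by ring] at hnn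
  exact (Real.le_sqrt (norm_nonneg x) (Nat.cast_nonneg n)).mpr hnn

/-- Let `(f i j)_{0 ≤ i,j ≤ mM-1}` be a system of matrix units in a C*-algebra
`A` and `β : A → A` a *-homomorphism with `β (f i j) = f (i+1) (j+1)` for
`0 ≤ i, j ≤ mM-2`. For `0 ≤ i ≤ M-1` set
`F i = m⁻¹ ∑_{k,l=0}^{m-1} f (i+kM) (i+lM)`. Then `F 0, …, F (M-1)` are
mutually orthogonal projections, `β (F i) = F (i+1)` for `0 ≤ i ≤ M-2`, and
`‖β (F (M-1)) - F 0‖ ≤ 4 / √m`. -/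
theorem averaged_matrix_units_towers
    {A : Type*} [NormedRing A] [StarRing A] [CStarRing A] [CompleteSpace A]
    [NormedAlgebra ℂ A] [StarModule ℂ A]
    (m M : ℕ) (hm : 1 ≤ m) (hM : 1 ≤ M)
    -- (f i j) is a system of matrix units of size m * M
    (f : ℕ → ℕ → A)
    (hfstar : ∀ i j, i < m * M → j < m * M → star (f i j) = f j i)
    (hfmul : ∀ i j k l, i < m * M → j < m * M → k < m * M → l < m * M →
      f i j * f k l = if j = k then f i l else 0)
    -- β is a *-homomorphism shifting the matrix units
    (β : A →⋆ₙₐ[ℂ] A)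
    (hβ : ∀ i j, i + 1 < m * M → j + 1 < m * M →
      β (f i j) = f (i + 1) (j + 1))
    :
    ∀ F : ℕ → A,
      (∀ i, i < M → F i = (m : ℂ)⁻¹ •
        ∑ k ∈ Finset.range m, ∑ l ∈ Finset.range m, f (i + k * M) (i + l * M)) →
      (∀ i, i < M → IsSelfAdjoint (F i) ∧ F i * F i = F i) ∧
      (∀ i j, i < M → j < M → i ≠ j → F i * F j = 0) ∧
      (∀ i, i + 1 < M → β (F i) = F (i + 1)) ∧
      ‖β (F (M - 1)) - F 0‖ ≤ 4 / Real.sqrt m := by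
  letI : CStarAlgebra A :=
    { ‹NormedRing A›, ‹StarRing A›, ‹CStarRing A›, ‹NormedAlgebra ℂ A›,
      ‹StarModule ℂ A›, ‹CompleteSpace A› with }
  intro F hF
  have hmC : (m : ℂ) ≠ 0 := Nat.cast_ne_zero.mpr (by omega)
  -- abbreviation for the un-normalized sums
  set P : ℕ → A := fun i => ∑ k ∈ Finset.range m, ∑ l ∈ Finset.range m,
    f (i + k * M) (i + l * M) with hPdef
  -- key product formula
  have hPP : ∀ i j, i < M → j < M →
      P i * P j = if i = j then (m : ℕ) • P i else 0 := by
    intro i j hi hj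
    by_cases hij : i = j
    · subst hij
      rw [if_pos rfl, hPdef]
      simp only
      rw [Finset.sum_mul_sum, Finset.smul_sum]
      refine Finset.sum_congr rfl fun k hk => ?_
      have inner : ∀ k' ∈ Finset.range m,
          (∑ l ∈ Finset.range m, f (i + k * M) (i + l * M)) *
            (∑ l' ∈ Finset.range m, f (i + k' * M) (i + l' * M)) =
          ∑ l' ∈ Finset.range m, f (i + k * M) (i + l' * M) := by
        intro k' hk'
        rw [Finset.sum_mul_sum]
        calc ∑ l ∈ Finset.range m, ∑ l' ∈ Finset.range m,
              f (i + k * M) (i + l * M) * f (i + k' * M) (i + l' * M)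
            = ∑ l ∈ Finset.range m, ∑ l' ∈ Finset.range m,
              (if l = k' then f (i + k * M) (i + l' * M) else 0) := by
              refine Finset.sum_congr rfl fun l hl => Finset.sum_congr rfl fun l' hl' => ?_
              rw [hfmul _ _ _ _
                (aux_idx_lt hi (Finset.mem_range.mp hk))
                (aux_idx_lt hi (Finset.mem_range.mp hl))
                (aux_idx_lt hi (Finset.mem_range.mp hk'))
                (aux_idx_lt hi (Finset.mem_range.mp hl'))]
              exact if_congr ((aux_idx_eq l k' hi hi).trans (by simp)) rfl rfl
          _ = ∑ l' ∈ Finset.range m, ∑ l ∈ Finset.range m,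
              (if l = k' then f (i + k * M) (i + l' * M) else 0) := Finset.sum_comm
          _ = ∑ l' ∈ Finset.range m, f (i + k * M) (i + l' * M) := by
              refine Finset.sum_congr rfl fun l' hl' => ?_
              rw [Finset.sum_ite_eq' (Finset.range m) k'
                (fun _ => f (i + k * M) (i + l' * M)), if_pos hk']
      rw [Finset.sum_congr rfl inner, Finset.sum_const, Finset.card_range]
    · rw [if_neg hij, hPdef]
      simp only
      rw [Finset.sum_mul_sum]
      refine Finset.sum_eq_zero fun k hk => Finset.sum_eq_zero fun k' hk' => ?_
      rw [Finset.sum_mul_sum]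
      refine Finset.sum_eq_zero fun l hl => Finset.sum_eq_zero fun l' hl' => ?_
      rw [hfmul _ _ _ _
        (aux_idx_lt hi (Finset.mem_range.mp hk))
        (aux_idx_lt hi (Finset.mem_range.mp hl))
        (aux_idx_lt hj (Finset.mem_range.mp hk'))
        (aux_idx_lt hj (Finset.mem_range.mp hl'))]
      exact if_neg fun h => hij ((aux_idx_eq l k' hi hj).mp h).1
  have hPstar : ∀ i, i < M → star (P i) = P i := by
    intro i hi
    rw [hPdef]
    simp only [star_sum]
    rw [Finset.sum_comm]
    refine Finset.sum_congr rfl fun k hk => Finset.sum_congr rfl fun l hl => ?_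
    exact hfstar _ _ (aux_idx_lt hi (Finset.mem_range.mp hl))
      (aux_idx_lt hi (Finset.mem_range.mp hk))
  refine ⟨?_, ?_, ?_, ?_⟩
  · -- projections
    intro i hi
    rw [hF i hi]
    constructor
    · rw [IsSelfAdjoint, star_smul, hPstar i hi]
      congr 1
      simp
    · rw [smul_mul_smul_comm, hPP i i hi hi, if_pos rfl,
        ← Nat.cast_smul_eq_nsmul ℂ, smul_smul,
        show ((m:ℂ)⁻¹ * (m:ℂ)⁻¹ * (m:ℂ)) = (m:ℂ)⁻¹ by field_simp]
  · -- orthogonality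
    intro i j hi hj hij
    rw [hF i hi, hF j hj, smul_mul_smul_comm, hPP i j hi hj, if_neg hij, smul_zero]
  · -- shift
    intro i hi1
    have hi : i < M := by omega
    rw [hF i hi, hF (i + 1) hi1, map_smul]
    congr 1
    rw [map_sum]
    refine Finset.sum_congr rfl fun k hk => ?_
    rw [map_sum]
    refine Finset.sum_congr rfl fun l hl => ?_
    have hk' := Finset.mem_range.mp hk
    have hl' := Finset.mem_range.mp hl
    rw [hβ _ _ (by have := aux_idx_lt hi1 hk'; omega)
      (by have := aux_idx_lt hi1 hl'; omega)]
    congr 1 <;> omega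
  · -- norm estimate
    obtain ⟨m', rfl⟩ : ∃ m', m = m' + 1 := ⟨m - 1, by omega⟩
    have hM1 : M - 1 < M := by omega
    have hMpos : (0:ℕ) < M := hM
    have hj1 : M - 1 + m' * M < (m' + 1) * M := aux_idx_lt (by omega) (by omega)
    have hlt : ∀ k : ℕ, k < m' + 1 → k * M < (m' + 1) * M :=
      fun k hk => by
        have h1 : (m' + 1) * M = m' * M + M := by ring
        have h2 : k * M ≤ m' * M := Nat.mul_le_mul_right M (by omega)
        omega
    have harith : ∀ k : ℕ, M - 1 + k * M + 1 = (k + 1) * M := by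
      intro k
      have : (k + 1) * M = k * M + M := by ring
      omega
    have hidx : ∀ k : ℕ, k < m' + 1 → M - 1 + k * M < (m' + 1) * M :=
      fun k hk => aux_idx_lt (by omega) hk
    -- splitting of the two double sums
    have hsplitP : (∑ k ∈ Finset.range (m' + 1), ∑ l ∈ Finset.range (m' + 1),
          f (M - 1 + k * M) (M - 1 + l * M)) =
        (∑ k ∈ Finset.range m', ∑ l ∈ Finset.range m',
          f (M - 1 + k * M) (M - 1 + l * M)) +
        (∑ k ∈ Finset.range (m' + 1), f (M - 1 + k * M) (M - 1 + m' * M)) +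
        (∑ l ∈ Finset.range m', f (M - 1 + m' * M) (M - 1 + l * M)) := by
      simp_rw [Finset.sum_range_succ, Finset.sum_add_distrib]
      abel
    have hsplitQ : (∑ k ∈ Finset.range (m' + 1), ∑ l ∈ Finset.range (m' + 1),
          f (0 + k * M) (0 + l * M)) =
        (∑ k ∈ Finset.range m', ∑ l ∈ Finset.range m',
          f ((k + 1) * M) ((l + 1) * M)) +
        (∑ l ∈ Finset.range (m' + 1), f 0 (l * M)) +
        (∑ k ∈ Finset.range m', f ((k + 1) * M) 0) := by
      simp_rw [zero_add, Finset.sum_range_succ', Finset.sum_add_distrib, Nat.zero_mul]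
      abel
    -- β maps the good part of P to the good part of Q
    have hβG : β (∑ k ∈ Finset.range m', ∑ l ∈ Finset.range m',
          f (M - 1 + k * M) (M - 1 + l * M)) =
        ∑ k ∈ Finset.range m', ∑ l ∈ Finset.range m',
          f ((k + 1) * M) ((l + 1) * M) := by
      rw [map_sum]
      refine Finset.sum_congr rfl fun k hk => ?_
      rw [map_sum]
      refine Finset.sum_congr rfl fun l hl => ?_
      have hk' := Finset.mem_range.mp hk
      have hl' := Finset.mem_range.mp hl
      rw [hβ _ _ (by rw [harith]; exact hlt _ (by omega))
        (by rw [harith]; exact hlt _ (by omega))]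
      rw [harith, harith]
    -- norm bounds for the four boundary sums
    have hm1M : m' + 1 < M ∨ True := Or.inr trivial
    have hb1 : ‖∑ k ∈ Finset.range (m' + 1), f (M - 1 + k * M) (M - 1 + m' * M)‖ ≤
        Real.sqrt ((m' + 1 : ℕ) : ℝ) := by
      have := aux_row_norm ((m' + 1) * M) f hfstar hfmul (m' + 1)
        (fun k => M - 1 + k * M) (fun k hk => hidx k (by omega))
        (fun k l hk hl h =>
          ((aux_idx_eq k l (show M - 1 < M by omega) (show M - 1 < M by omega)).mp h).2)
        (M - 1 + m' * M) hj1
      simpa using this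
    have hsqmono : Real.sqrt ((m' : ℕ) : ℝ) ≤ Real.sqrt ((m' + 1 : ℕ) : ℝ) :=
      Real.sqrt_le_sqrt (by exact_mod_cast Nat.le_succ m')
    have hb2 : ‖∑ l ∈ Finset.range m', f (M - 1 + m' * M) (M - 1 + l * M)‖ ≤
        Real.sqrt ((m' + 1 : ℕ) : ℝ) := by
      have hstar : (∑ l ∈ Finset.range m', f (M - 1 + m' * M) (M - 1 + l * M)) =
          star (∑ l ∈ Finset.range m', f (M - 1 + l * M) (M - 1 + m' * M)) := by
        rw [star_sum]
        refine Finset.sum_congr rfl fun l hl => ?_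
        exact (hfstar _ _ (hidx l (by have := Finset.mem_range.mp hl; omega)) hj1).symm
      rw [hstar, norm_star]
      refine le_trans ?_ hsqmono
      have := aux_row_norm ((m' + 1) * M) f hfstar hfmul m'
        (fun l => M - 1 + l * M) (fun l hl => hidx l (by omega))
        (fun k l hk hl h =>
          ((aux_idx_eq k l (show M - 1 < M by omega) (show M - 1 < M by omega)).mp h).2)
        (M - 1 + m' * M) hj1
      simpa using this
    have hb3 : ‖∑ l ∈ Finset.range (m' + 1), f 0 (l * M)‖ ≤
        Real.sqrt ((m' + 1 : ℕ) : ℝ) := by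
      have hstar : (∑ l ∈ Finset.range (m' + 1), f 0 (l * M)) =
          star (∑ l ∈ Finset.range (m' + 1), f (l * M) 0) := by
        rw [star_sum]
        refine Finset.sum_congr rfl fun l hl => ?_
        exact (hfstar _ _ (hlt l (Finset.mem_range.mp hl))
          (by positivity)).symm
      rw [hstar, norm_star]
      have := aux_row_norm ((m' + 1) * M) f hfstar hfmul (m' + 1)
        (fun l => l * M) (fun l hl => hlt l hl)
        (fun k l hk hl h => Nat.eq_of_mul_eq_mul_right hMpos h)
        0 (by positivity)
      simpa using this
    have hb4 : ‖∑ k ∈ Finset.range m', f ((k + 1) * M) 0‖ ≤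
        Real.sqrt ((m' + 1 : ℕ) : ℝ) := by
      refine le_trans ?_ hsqmono
      have := aux_row_norm ((m' + 1) * M) f hfstar hfmul m'
        (fun k => (k + 1) * M) (fun k hk => hlt (k + 1) (by omega))
        (fun k l hk hl h => by
          have := Nat.eq_of_mul_eq_mul_right hMpos h
          omega)
        0 (by positivity)
      simpa using this
    have hβn : ∀ x : A, ‖β x‖ ≤ ‖x‖ := fun x => NonUnitalStarAlgHom.norm_apply_le β x
    -- the key bound
    have key : ‖β (∑ k ∈ Finset.range (m' + 1), ∑ l ∈ Finset.range (m' + 1),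
          f (M - 1 + k * M) (M - 1 + l * M)) -
        ∑ k ∈ Finset.range (m' + 1), ∑ l ∈ Finset.range (m' + 1),
          f (0 + k * M) (0 + l * M)‖ ≤ 4 * Real.sqrt ((m' + 1 : ℕ) : ℝ) := by
      rw [hsplitP, hsplitQ, map_add, map_add, hβG]
      have hre : ∀ G Sr Sc Tr Tc : A, G + Sr + Sc - (G + Tr + Tc) =
          (Sr - Tr) + (Sc - Tc) := by intros; abel
      rw [hre]
      calc ‖(β (∑ k ∈ Finset.range (m' + 1), f (M - 1 + k * M) (M - 1 + m' * M)) -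
              ∑ l ∈ Finset.range (m' + 1), f 0 (l * M)) +
            (β (∑ l ∈ Finset.range m', f (M - 1 + m' * M) (M - 1 + l * M)) -
              ∑ k ∈ Finset.range m', f ((k + 1) * M) 0)‖ ≤
          ‖β (∑ k ∈ Finset.range (m' + 1), f (M - 1 + k * M) (M - 1 + m' * M)) -
              ∑ l ∈ Finset.range (m' + 1), f 0 (l * M)‖ +
            ‖β (∑ l ∈ Finset.range m', f (M - 1 + m' * M) (M - 1 + l * M)) -
              ∑ k ∈ Finset.range m', f ((k + 1) * M) 0‖ := norm_add_le _ _
        _ ≤ (‖β (∑ k ∈ Finset.range (m' + 1), f (M - 1 + k * M) (M - 1 + m' * M))‖ +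
              ‖∑ l ∈ Finset.range (m' + 1), f 0 (l * M)‖) +
            (‖β (∑ l ∈ Finset.range m', f (M - 1 + m' * M) (M - 1 + l * M))‖ +
              ‖∑ k ∈ Finset.range m', f ((k + 1) * M) 0‖) := by
            gcongr <;> exact norm_sub_le _ _
        _ ≤ 4 * Real.sqrt ((m' + 1 : ℕ) : ℝ) := by
            have g1 := le_trans (hβn _) hb1
            have g2 := le_trans (hβn _) hb2
            linarith
    -- finish
    rw [hF (M - 1) hM1, hF 0 hMpos, map_smul, ← smul_sub, norm_smul]
    have hnc : ‖((m' + 1 : ℕ) : ℂ)⁻¹‖ = (((m' + 1 : ℕ) : ℝ))⁻¹ := by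
      rw [norm_inv, Complex.norm_natCast]
    rw [hnc]
    have hpos : (0:ℝ) < ((m' + 1 : ℕ) : ℝ) := by positivity
    have hspos : 0 < Real.sqrt ((m' + 1 : ℕ) : ℝ) := Real.sqrt_pos.mpr hpos
    have hsq : Real.sqrt ((m' + 1 : ℕ) : ℝ) * Real.sqrt ((m' + 1 : ℕ) : ℝ) =
        ((m' + 1 : ℕ) : ℝ) := Real.mul_self_sqrt (le_of_lt hpos)
    calc (((m' + 1 : ℕ) : ℝ))⁻¹ * ‖β (∑ k ∈ Finset.range (m' + 1),
          ∑ l ∈ Finset.range (m' + 1), f (M - 1 + k * M) (M - 1 + l * M)) -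
          ∑ k ∈ Finset.range (m' + 1), ∑ l ∈ Finset.range (m' + 1),
            f (0 + k * M) (0 + l * M)‖ ≤
        (((m' + 1 : ℕ) : ℝ))⁻¹ * (4 * Real.sqrt ((m' + 1 : ℕ) : ℝ)) := by
          gcongr
        _ = 4 / Real.sqrt ((m' + 1 : ℕ) : ℝ) := by
          rw [eq_div_iff (ne_of_gt hspos)]
          field_simp
          nlinarith [Real.mul_self_sqrt (show (0:ℝ) ≤ (m':ℝ) + 1 by positivity)]
end

section
/- For every integer n ≥ 2 and every η > 0 there exists δ > 0 with the following property: whenever A is a unital C*-algebra, σ : A → A is a unital *-homomorphism, and q_0,…,q_{n−1} are mutually orthogonal projections in A with ‖σ(q_l) − q_{l+1}‖ < δ for all 0 ≤ l ≤ n−2, there exists a unitary u ∈ A with ‖u − 1‖ < η and u σ(q_l) u* = q_{l+1} for all 0 ≤ l ≤ n−2. -/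
universe u

section Aux
variable {A : Type*} [CStarAlgebra A]

lemma commute_of_mem_elemental {a b y : A}
    (hab : Commute a b) (hab' : Commute (star a) b)
    (hy : y ∈ StarAlgebra.elemental ℂ a) : Commute y b := by
  induction hy using StarAlgebra.elemental.induction_on with
  | self => exact hab
  | star_self => exact hab'
  | algebraMap r => exact (Algebra.commute_algebraMap_left r b)
  | add u hu v hv Hu Hv => exact Hu.add_left Hv
  | mul u hu v hv Hu Hv => exact Hu.mul_left Hv
  | closure s hs H v hv =>
      have hcl : IsClosed {x : A | Commute x b} := by
        simpa [Commute, SemiconjBy] using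
          isClosed_eq (continuous_id.mul continuous_const) (continuous_const.mul continuous_id)
      exact hcl.closure_subset_iff.mpr (fun u hu => H u hu) hv

lemma commute_cfc_of_commute {a b : A} (ha : IsSelfAdjoint a)
    (hab : Commute a b) (f : ℝ → ℝ) : Commute (cfc f a) b := by
  rw [cfc_real_eq_complex f ha]
  refine cfc_cases (fun x => Commute x b) a _ (Commute.zero_left b) fun hg hn => ?_
  rw [cfcHom_eq_of_isStarNormal]
  exact commute_of_mem_elemental hab (ha.star_eq.symm ▸ hab) (SetLike.coe_mem _)

lemma norm_le_one_of_proj {e : A} (he : IsSelfAdjoint e) (h2 : e * e = e) : ‖e‖ ≤ 1 := by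
  have h := CStarRing.norm_star_mul_self (x := e)
  rw [he.star_eq, h2] at h
  nlinarith [norm_nonneg e]

end Aux

lemma aux_sqrt_bound {ε t : ℝ} (hε0 : 0 ≤ ε) (hε1 : ε ≤ 1/50) (ht : |t - 1| ≤ 3*ε) :
    |(Real.sqrt t)⁻¹ - 1| ≤ 6 * ε := by
  obtain ⟨h1, h2⟩ := abs_le.mp ht
  have ht0 : (0:ℝ) < t := by linarith
  have hs := Real.mul_self_sqrt ht0.le
  have hs0 : 0 ≤ Real.sqrt t := Real.sqrt_nonneg t
  set s := Real.sqrt t with hsdef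
  have hs9 : (7 : ℝ) / 10 ≤ s := by nlinarith
  have hinv : s⁻¹ * s = 1 := inv_mul_cancel₀ (by linarith)
  rw [abs_le]
  constructor
  · nlinarith [sq_nonneg (s - 1), sq_nonneg (s⁻¹ - 1), mul_pos (show (0:ℝ) < s⁻¹ by positivity) (show (0:ℝ) < s by linarith)]
  · nlinarith [sq_nonneg (s - 1), sq_nonneg (s⁻¹ - 1), mul_pos (show (0:ℝ) < s⁻¹ by positivity) (show (0:ℝ) < s by linarith)]

open Finset

/-- For every `n ≥ 2` and `η > 0` there is `δ > 0` such that whenever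
`σ : A → A` is a unital *-homomorphism of a unital C*-algebra `A` and
`q 0, …, q (n-1)` are mutually orthogonal projections in `A` with
`‖σ (q l) - q (l+1)‖ < δ` for `0 ≤ l ≤ n-2`, there is a unitary `u ∈ A` with
`‖u - 1‖ < η` and `u σ (q l) u* = q (l+1)` for `0 ≤ l ≤ n-2`. -/
theorem exists_unitary_conjugating_almost_shifted_projections :
    ∀ n : ℕ, 2 ≤ n → ∀ η : ℝ, 0 < η → ∃ δ : ℝ, 0 < δ ∧
      ∀ (A : Type u) [NormedRing A] [StarRing A] [CStarRing A] [CompleteSpace A]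
        [NormedAlgebra ℂ A] [StarModule ℂ A],
        ∀ (σ : A →⋆ₐ[ℂ] A) (q : ℕ → A),
          (∀ l, l < n → IsSelfAdjoint (q l) ∧ q l * q l = q l) →
          (∀ l l', l < n → l' < n → l ≠ l' → q l * q l' = 0) →
          (∀ l, l + 1 < n → ‖σ (q l) - q (l + 1)‖ < δ) →
          ∃ u ∈ unitary A, ‖u - 1‖ < η ∧
            ∀ l, l + 1 < n → u * σ (q l) * star u = q (l + 1) := by
  intro n hn η hη
  have hn2 : (2:ℝ) ≤ (n:ℝ) := by exact_mod_cast hn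
  have hnpos : (0:ℝ) < 100 * n := by nlinarith
  set δ : ℝ := min η 1 / (100 * n) with hδdef
  have hδpos : 0 < δ := div_pos (lt_min hη one_pos) hnpos
  refine ⟨δ, hδpos, ?_⟩
  intro A _ _ _ _ _ _ σ q hqp hqo hclose
  letI : CStarAlgebra A := { }
  set m := n - 1 with hm
  have hmem : ∀ l, l ∈ range m ↔ l + 1 < n := by intro l; simp [hm]; omega
  set p : ℕ → A := fun l => σ (q l) with hp
  -- properties of q
  have hq_sa : ∀ l, l < n → IsSelfAdjoint (q l) := fun l hl => (hqp l hl).1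
  have hq_idem : ∀ l, l < n → q l * q l = q l := fun l hl => (hqp l hl).2
  have hq_norm : ∀ l, l < n → ‖q l‖ ≤ 1 := fun l hl =>
    norm_le_one_of_proj (hq_sa l hl) (hq_idem l hl)
  -- properties of p
  have hp_sa : ∀ l, l < n → IsSelfAdjoint (p l) := fun l hl => by
    simpa [hp, IsSelfAdjoint, ← map_star] using congrArg σ (hq_sa l hl).star_eq
  have hp_idem : ∀ l, l < n → p l * p l = p l := fun l hl => by
    simpa [hp, ← map_mul] using congrArg σ (hq_idem l hl)
  have hp_orth : ∀ l l', l < n → l' < n → l ≠ l' → p l * p l' = 0 := fun l l' h h' hne => by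
    simpa [hp, ← map_mul] using congrArg σ (hqo l l' h h' hne)
  set P : A := ∑ l ∈ range m, p l with hP
  set Q : A := ∑ l ∈ range m, q (l + 1) with hQ
  have hP_mul_p : ∀ l, l + 1 < n → P * p l = p l := by
    intro l hl
    rw [hP, sum_mul, Finset.sum_eq_single l]
    · exact hp_idem l (by omega)
    · intro k hk hkl
      rw [hmem] at hk
      exact hp_orth k l (by omega) (by omega) hkl
    · intro h; exact absurd ((hmem l).mpr hl) h
  have hq_mul_Q : ∀ l, l + 1 < n → q (l + 1) * Q = q (l + 1) := by
    intro l hl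
    rw [hQ, mul_sum, Finset.sum_eq_single l]
    · exact hq_idem (l+1) (by omega)
    · intro k hk hkl
      rw [hmem] at hk
      exact hqo (l+1) (k+1) (by omega) (by omega) (by omega)
    · intro h; exact absurd ((hmem l).mpr hl) h
  have hQQ : Q * Q = Q := by
    rw [hQ, sum_mul]
    refine Finset.sum_congr rfl fun l hl => ?_
    rw [hmem] at hl
    exact hq_mul_Q l hl
  have hQ_idem_1 : (1 - Q) * (1 - Q) = 1 - Q := by
    have e : (1 - Q) * (1 - Q) = 1 - Q - Q + Q * Q := by noncomm_ring
    rw [e, hQQ]; abel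
  have hQ_sa : IsSelfAdjoint Q := by
    rw [hQ, IsSelfAdjoint, star_sum]
    exact Finset.sum_congr rfl fun l hl => (hq_sa (l+1) (by rw [hmem] at hl; omega)).star_eq
  have h1Q_sa : IsSelfAdjoint ((1:A) - Q) := by
    rw [IsSelfAdjoint, star_sub, star_one, hQ_sa.star_eq]
  have h1Q_norm : ‖(1 : A) - Q‖ ≤ 1 := norm_le_one_of_proj h1Q_sa hQ_idem_1
  set x : A := (∑ l ∈ range m, q (l + 1) * p l) + (1 - Q) * (1 - P) with hx
  -- intertwining
  have hxp : ∀ l, l + 1 < n → x * p l = q (l + 1) * x := by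
    intro l hl
    have h1 : (∑ k ∈ range m, q (k + 1) * p k) * p l = q (l + 1) * p l := by
      rw [sum_mul, Finset.sum_eq_single l]
      · rw [mul_assoc, hp_idem l (by omega)]
      · intro k hk hkl
        rw [mul_assoc, hp_orth k l (by rw [hmem] at hk; omega) (by omega) hkl, mul_zero]
      · intro h; exact absurd ((hmem l).mpr hl) h
    have h2 : (1 - P) * p l = 0 := by
      rw [sub_mul, one_mul, hP_mul_p l hl, sub_self]
    have h3 : q (l + 1) * (∑ k ∈ range m, q (k + 1) * p k) = q (l + 1) * p l := by
      rw [mul_sum, Finset.sum_eq_single l]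
      · rw [← mul_assoc, hq_idem (l+1) (by omega)]
      · intro k hk hkl
        rw [← mul_assoc, hqo (l+1) (k+1) (by omega) (by rw [hmem] at hk; omega) (by omega),
          zero_mul]
      · intro h; exact absurd ((hmem l).mpr hl) h
    have h4 : q (l + 1) * (1 - Q) = 0 := by
      rw [mul_sub, mul_one, hq_mul_Q l hl, sub_self]
    calc x * p l = (∑ k ∈ range m, q (k + 1) * p k) * p l + (1 - Q) * ((1 - P) * p l) := by
          rw [hx, add_mul, mul_assoc]
      _ = q (l + 1) * p l := by rw [h1, h2, mul_zero, add_zero]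
      _ = q (l + 1) * (∑ k ∈ range m, q (k + 1) * p k) + (q (l+1) * (1 - Q)) * (1 - P) := by
          rw [h3, h4, zero_mul, add_zero]
      _ = q (l + 1) * x := by rw [hx, mul_add, mul_assoc]
  -- norm estimate on x - 1
  have hδ' : ∀ l, l + 1 < n → ‖p l - q (l + 1)‖ ≤ δ := fun l hl => (hclose l hl).le
  have hQP_norm : ‖Q - P‖ ≤ m * δ := by
    have : Q - P = ∑ l ∈ range m, (q (l + 1) - p l) := by rw [hQ, hP, Finset.sum_sub_distrib]
    rw [this]
    calc ‖∑ l ∈ range m, (q (l + 1) - p l)‖ ≤ ∑ l ∈ range m, ‖q (l + 1) - p l‖ :=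
          norm_sum_le _ _
      _ ≤ ∑ l ∈ range m, δ := by
          refine Finset.sum_le_sum fun l hl => ?_
          rw [norm_sub_rev]
          exact hδ' l ((hmem l).mp hl)
      _ = m * δ := by rw [Finset.sum_const, card_range, nsmul_eq_mul]
  have hx1 : ‖x - 1‖ ≤ 2 * m * δ := by
    have hid : x - 1 = (∑ l ∈ range m, q (l + 1) * (p l - q (l + 1))) + (1 - Q) * (Q - P) := by
      have e1 : ∑ l ∈ range m, q (l + 1) * (p l - q (l + 1))
          = (∑ l ∈ range m, q (l + 1) * p l) - Q := by
        rw [hQ, ← Finset.sum_sub_distrib]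
        refine Finset.sum_congr rfl fun l hl => ?_
        rw [mul_sub, hq_idem (l+1) (by rw [hmem] at hl; omega)]
      have e2 : (1 - Q) * (Q - P) = (1 - Q) * (1 - P) - (1 - Q) := by
        have : Q - P = (1 - P) - (1 - Q) := by abel
        rw [this, mul_sub, hQ_idem_1]
      rw [e1, e2, hx]; abel
    rw [hid]
    have hb1 : ‖∑ l ∈ range m, q (l + 1) * (p l - q (l + 1))‖ ≤ m * δ := by
      calc ‖∑ l ∈ range m, q (l + 1) * (p l - q (l + 1))‖
          ≤ ∑ l ∈ range m, ‖q (l + 1) * (p l - q (l + 1))‖ := norm_sum_le _ _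
        _ ≤ ∑ l ∈ range m, δ := by
            refine Finset.sum_le_sum fun l hl => ?_
            rw [hmem] at hl
            calc ‖q (l + 1) * (p l - q (l + 1))‖ ≤ ‖q (l+1)‖ * ‖p l - q (l+1)‖ := norm_mul_le _ _
              _ ≤ 1 * δ := by
                  exact mul_le_mul (hq_norm (l+1) (by omega)) (hδ' l hl) (norm_nonneg _)
                    zero_le_one
              _ = δ := one_mul δ
        _ = m * δ := by rw [Finset.sum_const, card_range, nsmul_eq_mul]
    calc ‖(∑ l ∈ range m, q (l + 1) * (p l - q (l + 1))) + (1 - Q) * (Q - P)‖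
        ≤ ‖∑ l ∈ range m, q (l + 1) * (p l - q (l + 1))‖ + ‖(1 - Q) * (Q - P)‖ := norm_add_le _ _
      _ ≤ m * δ + ‖1 - Q‖ * ‖Q - P‖ := add_le_add hb1 (norm_mul_le _ _)
      _ ≤ m * δ + 1 * (m * δ) := by
          refine add_le_add_right (mul_le_mul h1Q_norm hQP_norm (norm_nonneg _) zero_le_one) _
      _ = 2 * m * δ := by ring
  -- trivial case
  rcases subsingleton_or_nontrivial A with hA | hA
  · refine ⟨1, one_mem (unitary A), by simpa using hη, fun l hl => Subsingleton.elim _ _⟩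
  -- analytic part
  set ε : ℝ := 2 * m * δ with hεdef
  have hε0 : 0 ≤ ε := by positivity
  have hmn : (m : ℝ) ≤ (n : ℝ) := by exact_mod_cast Nat.sub_le n 1
  have hminpos : 0 < min η 1 := lt_min hη one_pos
  have hε50 : ε ≤ min η 1 / 50 := by
    have h1 : ε ≤ 2 * (n : ℝ) * δ := by
      rw [hεdef]; gcongr
    have h2 : 2 * (n : ℝ) * δ = min η 1 / 50 := by
      rw [hδdef]; field_simp; ring
    linarith
  have hε1 : ε ≤ 1 / 50 := by
    have := min_le_right η 1
    have : min η 1 / 50 ≤ 1 / 50 := by linarith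
    linarith
  have hεη : 8 * ε < η := by
    have h1 := min_le_left η 1
    nlinarith
  have h1sa : IsSelfAdjoint (1 : A) := star_one A
  have h1norm : ‖(1 : A)‖ ≤ 1 := norm_le_one_of_proj h1sa (one_mul 1)
  have hxnorm : ‖x‖ ≤ 1 + ε := by
    calc ‖x‖ = ‖(x - 1) + 1‖ := by rw [sub_add_cancel]
      _ ≤ ‖x - 1‖ + ‖(1 : A)‖ := norm_add_le _ _
      _ ≤ ε + 1 := add_le_add hx1 h1norm
      _ = 1 + ε := by ring
  set a : A := star x * x with ha_def
  have ha : IsSelfAdjoint a := IsSelfAdjoint.star_mul_self x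
  have ha1 : ‖a - 1‖ ≤ 3 * ε := by
    have e : a - 1 = star x * (x - 1) + (star x - 1) := by rw [ha_def]; noncomm_ring
    have h2 : ‖star x - 1‖ = ‖x - 1‖ := by
      calc ‖star x - 1‖ = ‖star (x - 1)‖ := by rw [star_sub, star_one]
        _ = ‖x - 1‖ := norm_star _
    calc ‖a - 1‖ = ‖star x * (x - 1) + (star x - 1)‖ := by rw [e]
      _ ≤ ‖star x * (x - 1)‖ + ‖star x - 1‖ := norm_add_le _ _
      _ ≤ ‖star x‖ * ‖x - 1‖ + ‖x - 1‖ := by rw [h2]; exact add_le_add_left (norm_mul_le _ _) _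
      _ ≤ (1 + ε) * ε + ε := by
          rw [norm_star]
          exact add_le_add (mul_le_mul hxnorm hx1 (norm_nonneg _) (by linarith)) hx1
      _ ≤ 3 * ε := by nlinarith
  have hspec : ∀ t ∈ spectrum ℝ a, |t - 1| ≤ 3 * ε := by
    intro t ht
    have h1 : t - 1 ∈ spectrum ℝ (a - algebraMap ℝ A 1) := by
      rw [← spectrum.sub_singleton_eq]
      exact Set.sub_mem_sub ht rfl
    rw [map_one] at h1
    have h2 := spectrum.norm_le_norm_of_mem h1
    rw [Real.norm_eq_abs] at h2
    linarith
  have hspos : ∀ t ∈ spectrum ℝ a, (1 : ℝ) / 2 ≤ t := by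
    intro t ht
    have := abs_le.mp (hspec t ht)
    linarith [this.1]
  set f : ℝ → ℝ := fun t => (Real.sqrt t)⁻¹ with hfdef
  have hf_cont : ContinuousOn f (spectrum ℝ a) := by
    refine ContinuousOn.inv₀ Real.continuous_sqrt.continuousOn fun t ht => ?_
    exact ne_of_gt (Real.sqrt_pos.mpr (by linarith [hspos t ht]))
  have hg_cont : ContinuousOn Real.sqrt (spectrum ℝ a) := Real.continuous_sqrt.continuousOn
  have hsq : ∀ t ∈ spectrum ℝ a, Real.sqrt t * Real.sqrt t = t := fun t ht =>
    Real.mul_self_sqrt (by linarith [hspos t ht])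
  have hsne : ∀ t ∈ spectrum ℝ a, Real.sqrt t ≠ 0 := fun t ht =>
    ne_of_gt (Real.sqrt_pos.mpr (by linarith [hspos t ht]))
  set b : A := cfc f a with hbdef
  have hb_sa : IsSelfAdjoint b := cfc_predicate f a
  have hb_inv1 : b * cfc Real.sqrt a = 1 := by
    rw [hbdef, ← cfc_mul f Real.sqrt a hf_cont hg_cont]
    calc cfc (fun t => f t * Real.sqrt t) a = cfc (1 : ℝ → ℝ) a := by
          refine cfc_congr fun t ht => ?_
          simp only [hfdef, Pi.one_apply]
          exact inv_mul_cancel₀ (hsne t ht)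
      _ = 1 := cfc_one ℝ a ha
  have hb_inv2 : cfc Real.sqrt a * b = 1 := by
    rw [hbdef, (cfc_commute_cfc Real.sqrt f a).eq, ← hbdef, hb_inv1]
  have hbu : IsUnit b := ⟨⟨b, cfc Real.sqrt a, hb_inv1, hb_inv2⟩, rfl⟩
  set u : A := x * b with hu_def
  have hxu : IsUnit x := by
    have h : ‖(1 : A) - x‖ < 1 := by rw [norm_sub_rev]; linarith
    simpa [sub_sub_cancel] using (Units.oneSub ((1 : A) - x) h).isUnit
  have huu : IsUnit u := hxu.mul hbu
  have key1 : star u * u = 1 := by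
    have e : star u * u = b * a * b := by
      rw [hu_def, star_mul, hb_sa.star_eq, ha_def]; noncomm_ring
    have m2 : cfc (fun t : ℝ => f t * t) a = b * a := by
      rw [hbdef, cfc_mul f (fun t : ℝ => t) a hf_cont continuousOn_id, cfc_id' ℝ a ha]
    have m1 : cfc (fun t : ℝ => f t * t * f t) a = b * a * b := by
      rw [cfc_mul (fun t : ℝ => f t * t) f a (by fun_prop (disch := assumption)) hf_cont, m2]
    rw [e, ← m1]
    calc cfc (fun t : ℝ => f t * t * f t) a = cfc (1 : ℝ → ℝ) a := by
          refine cfc_congr fun t ht => ?_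
          simp only [hfdef, Pi.one_apply]
          have h1 := hsq t ht
          have h2 := hsne t ht
          field_simp
          rw [sq, h1]
      _ = 1 := cfc_one ℝ a ha
  have key2 : u * star u = 1 := by
    obtain ⟨v, hv⟩ := huu
    have hk : star (v : A) * (v : A) = 1 := by rw [hv]; exact key1
    have h1 : star (v : A) = ↑v⁻¹ := by
      have h := congrArg (· * (↑v⁻¹ : A)) hk
      simpa [mul_assoc, Units.mul_inv] using h
    calc u * star u = ↑v * ↑v⁻¹ := by rw [← hv, h1]
      _ = 1 := Units.mul_inv v
  have humem : u ∈ unitary A := Unitary.mem_iff.mpr ⟨key1, key2⟩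
  -- commutation with projections
  have hconj : ∀ l, l + 1 < n → u * σ (q l) * star u = q (l + 1) := by
    intro l hl
    have h1 : x * p l = q (l + 1) * x := hxp l hl
    have h2 : p l * star x = star x * q (l + 1) := by
      have := congrArg star h1
      rw [star_mul, star_mul, (hp_sa l (by omega)).star_eq, (hq_sa (l + 1) (by omega)).star_eq]
        at this
      exact this
    have hap : Commute a (p l) := by
      show a * p l = p l * a
      calc a * p l = star x * (x * p l) := by rw [ha_def, mul_assoc]
        _ = star x * q (l + 1) * x := by rw [h1, mul_assoc]
        _ = p l * star x * x := by rw [← h2]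
        _ = p l * a := by rw [ha_def, mul_assoc]
    have hcomm : Commute b (p l) := commute_cfc_of_commute ha hap f
    have hup : u * p l = q (l + 1) * u := by
      calc u * p l = x * (b * p l) := by rw [hu_def, mul_assoc]
        _ = x * p l * b := by rw [hcomm.eq, mul_assoc]
        _ = q (l + 1) * u := by rw [h1, hu_def, mul_assoc]
    show u * p l * star u = q (l + 1)
    rw [hup, mul_assoc, key2, mul_one]
  -- norm estimate
  have hb1 : ‖b - 1‖ ≤ 6 * ε := by
    have e : b - 1 = cfc (fun t : ℝ => f t - 1) a := by
      rw [hbdef, cfc_sub f (fun _ : ℝ => 1) a hf_cont continuousOn_const, cfc_const 1 a ha,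
        map_one]
    rw [e]
    refine norm_cfc_le (by positivity) fun t ht => ?_
    rw [Real.norm_eq_abs]
    exact aux_sqrt_bound hε0 hε1 (hspec t ht)
  have hbnorm : ‖b‖ ≤ 2 := by
    calc ‖b‖ = ‖(b - 1) + 1‖ := by rw [sub_add_cancel]
      _ ≤ ‖b - 1‖ + ‖(1 : A)‖ := norm_add_le _ _
      _ ≤ 6 * ε + 1 := add_le_add hb1 h1norm
      _ ≤ 2 := by linarith
  have hun : ‖u - 1‖ ≤ 8 * ε := by
    have e : u - 1 = (x - 1) * b + (b - 1) := by rw [hu_def]; noncomm_ring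
    calc ‖u - 1‖ = ‖(x - 1) * b + (b - 1)‖ := by rw [e]
      _ ≤ ‖(x - 1) * b‖ + ‖b - 1‖ := norm_add_le _ _
      _ ≤ ‖x - 1‖ * ‖b‖ + 6 * ε := add_le_add (norm_mul_le _ _) hb1
      _ ≤ ε * 2 + 6 * ε := by
          refine add_le_add_left (mul_le_mul hx1 hbnorm (norm_nonneg _) hε0) _
      _ = 8 * ε := by ring
  exact ⟨u, humem, lt_of_le_of_lt hun hεη, hconj⟩
end
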